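/- arXiv:1903.09352 — 7 statements merged into one kernel-verified Lean document; each statement's English description precedes it below -/
import Mathlib

section
/- Let r and N be positive integers with N ≥ 3^(r² + r). Then for any partition [N] = A_1 ∪ ⋯ ∪ A_r of [N] into r parts, max{R_2(A_i) : 1 ≤ i ≤ r} ≥ N^(1/r) / 3^r. -/
open scoped Classical Pointwise

/-- `a` and `b` are consecutive elements of the finite set `A` of integers. -/
def ConsecIn (A : Finset ℤ) (a b : ℤ) : Prop :=
  a ∈ A ∧ b ∈ A ∧ a < b ∧ ∀ c ∈ A, c ≤ a ∨ b ≤ c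

/-- `A` is `L`-regular: some real `X > 0` bounds all consecutive gaps between `X` and `L*X`. -/
def IsRegularSet (L : ℝ) (A : Finset ℤ) : Prop :=
  ∃ X : ℝ, 0 < X ∧ ∀ a b : ℤ, ConsecIn A a b →
    X ≤ (b : ℝ) - (a : ℝ) ∧ (b : ℝ) - (a : ℝ) ≤ L * X

/-- `R_L(A)`: the maximum cardinality of an `L`-regular subset of `A`. -/
noncomputable def regMax (L : ℝ) (A : Finset ℤ) : ℕ :=
  (A.powerset.filter fun B => IsRegularSet L B).sup Finset.card

/-- `A` is strictly convex: the consecutive differences of its increasing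
enumeration are strictly increasing. -/
def IsConvexSet (A : Finset ℤ) : Prop :=
  ∀ a b c : ℤ, ConsecIn A a b → ConsecIn A b c → b - a < c - b

/-- `C(A)`: the maximum cardinality of a strictly convex subset of `A`. -/
noncomputable def convMax (A : Finset ℤ) : ℕ :=
  (A.powerset.filter fun B => IsConvexSet B).sup Finset.card

lemma regMax_mono {A B : Finset ℤ} (h : A ⊆ B) (L : ℝ) : regMax L A ≤ regMax L B :=
  Finset.sup_mono (Finset.filter_subset_filter _ (Finset.powerset_mono.mpr h))

lemma le_regMax_of_picks (A : Finset ℤ) (f : ℕ → ℤ) (t : ℕ) (X : ℝ) (hX : 0 < X)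
    (hmem : ∀ i < t, f i ∈ A)
    (hgap : ∀ i, i + 1 < t → X ≤ (f (i+1) : ℝ) - (f i : ℝ) ∧ (f (i+1) : ℝ) - (f i : ℝ) ≤ 2 * X) :
    t ≤ regMax 2 A := by
  have step : ∀ i, i + 1 < t → f i < f (i+1) := by
    intro i h
    have h1 := (hgap i h).1
    have : (f i : ℝ) < (f (i+1) : ℝ) := by linarith
    exact_mod_cast this
  have key : ∀ i j, i < j → j < t → f i < f j := by
    intro i j hij hjt
    induction j with
    | zero => omega
    | succ k ihk =>
      rcases Nat.lt_succ_iff_lt_or_eq.mp hij with h | h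
      · exact lt_trans (ihk h (by omega)) (step k hjt)
      · subst h; exact step i hjt
  set S : Finset ℤ := (Finset.range t).image f with hS
  have hinj : Set.InjOn f (Finset.range t) := by
    intro i hi j hj hij
    simp only [Finset.coe_range, Set.mem_Iio] at hi hj
    by_contra hne
    rcases lt_or_gt_of_ne hne with h | h
    · exact absurd hij (ne_of_lt (key i j h hj))
    · exact absurd hij.symm (ne_of_lt (key j i h hi))
  have hcard : S.card = t := by
    rw [hS, Finset.card_image_of_injOn hinj, Finset.card_range]
  have hsub : S ⊆ A := by
    intro x hx
    rw [hS, Finset.mem_image] at hx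
    obtain ⟨i, hi, rfl⟩ := hx
    exact hmem i (Finset.mem_range.mp hi)
  have hreg : IsRegularSet 2 S := by
    refine ⟨X, hX, ?_⟩
    rintro a b ⟨haS, hbS, hab, hcons⟩
    rw [hS, Finset.mem_image] at haS hbS
    obtain ⟨i, hi, rfl⟩ := haS
    obtain ⟨j, hj, rfl⟩ := hbS
    rw [Finset.mem_range] at hi hj
    have hij : i < j := by
      by_contra h
      push_neg at h
      rcases lt_or_eq_of_le h with h | h
      · exact absurd hab (not_lt_of_gt (key j i h hi))
      · subst h; exact absurd hab (lt_irrefl _)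
    have hji : j = i + 1 := by
      by_contra h
      have h2 : i + 1 < j := by omega
      have hc : f (i+1) ∈ S := by
        rw [hS, Finset.mem_image]
        exact ⟨i+1, Finset.mem_range.mpr (by omega), rfl⟩
      rcases hcons _ hc with h3 | h3
      · exact absurd h3 (not_le_of_gt (key i (i+1) (by omega) (by omega)))
      · exact absurd h3 (not_le_of_gt (key (i+1) j h2 hj))
    subst hji
    exact hgap i hj
  calc t = S.card := hcard.symm
    _ ≤ regMax 2 A := Finset.le_sup (by
        simp only [Finset.mem_filter, Finset.mem_powerset]
        exact ⟨hsub, hreg⟩)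

theorem main : ∀ r : ℕ, 0 < r → ∀ N : ℕ, 3 ^ (r ^ 2 + r) ≤ N → ∀ a : ℤ,
    ∀ A : Fin r → Finset ℤ,
    (∀ i j, i ≠ j → Disjoint (A i) (A j)) →
    Finset.univ.biUnion A = Finset.Icc (a + 1) (a + (N : ℤ)) →
    ∃ i, (N : ℝ) ^ ((1 : ℝ) / r) / 3 ^ r ≤ (regMax 2 (A i) : ℝ) := by
  intro r
  induction r with
  | zero => intro h; exact absurd h (lt_irrefl 0)
  | succ s ih =>
    intro _ N hN a A hdisj hcover
    have hNpos : 0 < N := lt_of_lt_of_le (pow_pos (by norm_num) _) hN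
    rcases Nat.eq_zero_or_pos s with hs | hs
    · -- base case r = 1
      subst hs
      have h0 : A 0 = Finset.Icc (a + 1) (a + (N : ℤ)) := by
        rw [← hcover]
        simp
      have hle : N ≤ regMax 2 (A 0) := by
        apply le_regMax_of_picks (A 0) (fun j => a + 1 + (j : ℤ)) N 1 one_pos
        · intro i hi
          rw [h0, Finset.mem_Icc]
          constructor
          · omega
          · have : (i : ℤ) + 1 ≤ N := by exact_mod_cast hi
            omega
        · intro i hi
          push_cast
          constructor <;> ring_nf <;> norm_num
      refine ⟨0, ?_⟩
      have h1 : (N : ℝ) ^ ((1 : ℝ) / ((0 : ℕ) + 1 : ℕ)) = (N : ℝ) := by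
        norm_num
      rw [h1]
      have h2 : (N : ℝ) ≤ (regMax 2 (A 0) : ℝ) := by exact_mod_cast hle
      have h3 : (0:ℝ) ≤ (N:ℝ) := by positivity
      norm_num
      linarith
    · -- inductive step, r = s + 1, s ≥ 1
      set e₁ : ℝ := (s : ℝ) / ((s : ℝ) + 1) with he₁
      have hsne : (s : ℝ) ≠ 0 := Nat.cast_ne_zero.mpr (by omega)
      have hs1ne : (s : ℝ) + 1 ≠ 0 := by positivity
      have he₁nonneg : 0 ≤ e₁ := by positivity
      have he₁le1 : e₁ ≤ 1 := by
        rw [he₁, div_le_one (by positivity)]; linarith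
      have hN1 : (1 : ℝ) ≤ (N : ℝ) := by exact_mod_cast hNpos
      set L : ℕ := ⌈(N : ℝ) ^ e₁⌉₊ with hL
      have hrpos : (0:ℝ) < (N : ℝ) ^ e₁ := Real.rpow_pos_of_pos (by positivity) _
      have hNe1 : (1 : ℝ) ≤ (N : ℝ) ^ e₁ := Real.one_le_rpow hN1 he₁nonneg
      have hL1 : 1 ≤ L := by
        rw [hL]; exact Nat.one_le_ceil_iff.mpr hrpos
      have hLceil : (N : ℝ) ^ e₁ ≤ (L : ℝ) := Nat.le_ceil _
      have hLN : L ≤ N := by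
        rw [hL]
        apply Nat.ceil_le.mpr
        calc (N : ℝ) ^ e₁ ≤ (N : ℝ) ^ (1:ℝ) :=
              Real.rpow_le_rpow_of_exponent_le hN1 he₁le1
          _ = (N : ℝ) := Real.rpow_one _
      have hLle : (L : ℝ) ≤ 2 * (N : ℝ) ^ e₁ := by
        have := Nat.ceil_lt_add_one (le_of_lt hrpos)
        rw [← hL] at this
        linarith
      set M : ℕ := N / L with hM
      have hM1 : 1 ≤ M := by
        rw [hM]; exact (Nat.one_le_div_iff (by omega)).mpr hLN
      have hblocksub : ∀ j : ℕ, j < M →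
          Finset.Icc (a + (j:ℤ)*(L:ℤ) + 1) (a + (j:ℤ)*(L:ℤ) + (L:ℤ)) ⊆
            Finset.Icc (a + 1) (a + (N : ℤ)) := by
        intro j hj x hx
        rw [Finset.mem_Icc] at hx ⊢
        have h1 : (j + 1) * L ≤ N := by
          calc (j+1) * L ≤ M * L := Nat.mul_le_mul_right L hj
            _ = (N / L) * L := rfl
            _ ≤ N := Nat.div_mul_le_self N L
        have h2 : ((j:ℤ)+1) * (L:ℤ) ≤ (N:ℤ) := by exact_mod_cast h1
        have h3 : (0:ℤ) ≤ (j:ℤ) * (L:ℤ) := by positivity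
        constructor <;> nlinarith [hx.1, hx.2]
      by_cases hcase : ∃ j < M, A 0 ∩ Finset.Icc (a + (j:ℤ)*(L:ℤ) + 1) (a + (j:ℤ)*(L:ℤ) + (L:ℤ)) = ∅
      · -- some block misses color 0: use induction on that block
        obtain ⟨j, hjM, hempty⟩ := hcase
        set b : ℤ := a + (j:ℤ)*(L:ℤ) with hb
        set A' : Fin s → Finset ℤ := fun k =>
          A ((0 : Fin (s+1)).succAbove k) ∩ Finset.Icc (b + 1) (b + (L:ℤ)) with hA'
        have hLbound : 3 ^ (s ^ 2 + s) ≤ L := by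
          have key : ((3:ℝ) ^ ((s+1) ^ 2 + (s+1) : ℕ)) ^ e₁ = (3:ℝ) ^ ((s^2 + 2*s : ℕ)) := by
            rw [← Real.rpow_natCast (3:ℝ) ((s+1)^2+(s+1)), ← Real.rpow_natCast (3:ℝ) (s^2+2*s),
              ← Real.rpow_mul (by norm_num)]
            congr 1
            rw [he₁]
            push_cast
            field_simp
            ring
          have h1 : ((3:ℝ) ^ ((s+1) ^ 2 + (s+1) : ℕ)) ^ e₁ ≤ ((N:ℝ)) ^ e₁ := by
            apply Real.rpow_le_rpow (by positivity) _ he₁nonneg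
            exact_mod_cast hN
          rw [key] at h1
          have h2 : ((3 ^ (s^2+2*s) : ℕ) : ℝ) ≤ (L : ℝ) := by
            push_cast
            linarith [hLceil]
          have h3 : (3:ℕ) ^ (s^2+2*s) ≤ L := by exact_mod_cast h2
          calc (3:ℕ) ^ (s^2+s) ≤ 3 ^ (s^2+2*s) := Nat.pow_le_pow_right (by norm_num) (by omega)
            _ ≤ L := h3
        have hdisj' : ∀ i j : Fin s, i ≠ j → Disjoint (A' i) (A' j) := by
          intro i j hij
          apply Disjoint.mono (Finset.inter_subset_left) (Finset.inter_subset_left)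
          exact hdisj _ _ (fun h => hij (Fin.succAbove_right_injective h))
        have hcover' : Finset.univ.biUnion A' = Finset.Icc (b + 1) (b + (L:ℕ)) := by
          ext x
          simp only [Finset.mem_biUnion, Finset.mem_univ, true_and, hA',
            Finset.mem_inter]
          constructor
          · rintro ⟨k, _, hx⟩; exact hx
          · intro hx
            have hx' : x ∈ Finset.Icc (a + 1) (a + (N : ℤ)) := hblocksub j hjM (by rwa [hb] at hx)
            rw [← hcover] at hx'
            simp only [Finset.mem_biUnion, Finset.mem_univ, true_and] at hx'
            obtain ⟨i, hi⟩ := hx'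
            have hine : i ≠ 0 := by
              rintro rfl
              have : x ∈ A 0 ∩ Finset.Icc (a + (j:ℤ)*(L:ℤ) + 1) (a + (j:ℤ)*(L:ℤ) + (L:ℤ)) :=
                Finset.mem_inter.mpr ⟨hi, by rwa [hb] at hx⟩
              rw [hempty] at this
              exact absurd this (Finset.notMem_empty x)
            obtain ⟨k, hk⟩ := Fin.exists_succAbove_eq hine
            exact ⟨k, by rw [hk]; exact hi, hx⟩
        obtain ⟨k, hk⟩ := ih hs L hLbound b A' hdisj' hcover'
        refine ⟨(0 : Fin (s+1)).succAbove k, ?_⟩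
        have hmono : (regMax 2 (A' k) : ℝ) ≤ (regMax 2 (A ((0 : Fin (s+1)).succAbove k)) : ℝ) := by
          exact_mod_cast regMax_mono (Finset.inter_subset_left) 2
        have h1 : (N:ℝ) ^ ((1:ℝ)/((s+1:ℕ):ℝ)) ≤ (L:ℝ) ^ ((1:ℝ)/((s:ℕ):ℝ)) := by
          calc (N:ℝ) ^ ((1:ℝ)/((s+1:ℕ):ℝ)) = ((N:ℝ) ^ e₁) ^ ((1:ℝ)/((s:ℕ):ℝ)) := by
                rw [← Real.rpow_mul (by positivity)]
                congr 1
                rw [he₁]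
                push_cast
                field_simp
            _ ≤ (L:ℝ) ^ ((1:ℝ)/((s:ℕ):ℝ)) := by
                apply Real.rpow_le_rpow (le_of_lt hrpos) hLceil (by positivity)
        have h2 : (3:ℝ) ^ s ≤ (3:ℝ) ^ (s+1) := by
          apply pow_le_pow_right₀ (by norm_num) (by omega)
        calc (N:ℝ) ^ ((1:ℝ)/((s+1:ℕ):ℝ)) / 3 ^ (s+1)
            ≤ (L:ℝ) ^ ((1:ℝ)/((s:ℕ):ℝ)) / 3 ^ s := by
              apply div_le_div₀ (by positivity) h1 (by positivity) h2
          _ ≤ (regMax 2 (A' k) : ℝ) := hk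
          _ ≤ _ := hmono
      · -- every block meets color 0
        push_neg at hcase
        have hfull : ∀ j : ℕ, j < M → ∃ x : ℤ, x ∈ A 0 ∧
            x ∈ Finset.Icc (a + (j:ℤ)*(L:ℤ) + 1) (a + (j:ℤ)*(L:ℤ) + (L:ℤ)) := by
          intro j hj
          have := hcase j hj
          obtain ⟨x, hx⟩ := this
          rw [Finset.mem_inter] at hx
          exact ⟨x, hx⟩
        set t : ℕ := (M + 2) / 3 with ht
        have h3j : ∀ j : ℕ, j < t → 3 * j < M := by intro j hj; omega
        set f : ℕ → ℤ := fun j => if h : 3 * j < M then (hfull (3 * j) h).choose else 0 with hf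
        have hfprop : ∀ j : ℕ, (h : 3 * j < M) → f j ∈ A 0 ∧
            f j ∈ Finset.Icc (a + ((3*j:ℕ):ℤ)*(L:ℤ) + 1) (a + ((3*j:ℕ):ℤ)*(L:ℤ) + (L:ℤ)) := by
          intro j h
          rw [hf]
          simp only [dif_pos h]
          exact (hfull (3*j) h).choose_spec
        have hLpos : (0:ℝ) < (L:ℝ) := by exact_mod_cast hL1
        have hreg : t ≤ regMax 2 (A 0) := by
          apply le_regMax_of_picks (A 0) f t (2 * (L:ℝ)) (by positivity)
          · intro i hi
            exact (hfprop i (h3j i hi)).1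
          · intro i hi
            have hi1 : 3 * i < M := h3j i (by omega)
            have hi2 : 3 * (i+1) < M := h3j (i+1) hi
            have p1 := (hfprop i hi1).2
            have p2 := (hfprop (i+1) hi2).2
            rw [Finset.mem_Icc] at p1 p2
            have q1 : (f i : ℝ) ≤ (a:ℝ) + (3*i) * L + L := by
              have := p1.2; push_cast at this ⊢; exact_mod_cast this
            have q2 : (a:ℝ) + (3*i) * L + 1 ≤ (f i : ℝ) := by
              have := p1.1; push_cast at this ⊢; exact_mod_cast this
            have q3 : (f (i+1) : ℝ) ≤ (a:ℝ) + (3*(i+1)) * L + L := by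
              have := p2.2; push_cast at this ⊢; exact_mod_cast this
            have q4 : (a:ℝ) + (3*(i+1)) * L + 1 ≤ (f (i+1) : ℝ) := by
              have := p2.1; push_cast at this ⊢; exact_mod_cast this
            constructor <;> nlinarith [hLpos]
        -- numeric endgame
        set y : ℝ := (N:ℝ) ^ ((1:ℝ)/((s+1:ℕ):ℝ)) with hy
        have hypos : 0 < y := Real.rpow_pos_of_pos (by positivity) _
        have hy27 : (27:ℝ) ≤ y := by
          have key : ((3:ℝ) ^ ((s+1)^2 + (s+1) : ℕ)) ^ ((1:ℝ)/((s+1:ℕ):ℝ)) = (3:ℝ) ^ ((s+2 : ℕ)) := by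
            rw [← Real.rpow_natCast (3:ℝ) ((s+1)^2+(s+1)), ← Real.rpow_natCast (3:ℝ) (s+2),
              ← Real.rpow_mul (by norm_num)]
            congr 1
            push_cast
            field_simp
            ring
          have h1 : ((3:ℝ) ^ ((s+1)^2 + (s+1) : ℕ)) ^ ((1:ℝ)/((s+1:ℕ):ℝ)) ≤ y := by
            rw [hy]
            apply Real.rpow_le_rpow (by positivity) _ (by positivity)
            exact_mod_cast hN
          rw [key] at h1
          calc (27:ℝ) = 3 ^ (3:ℕ) := by norm_num
            _ ≤ (3:ℝ) ^ ((s+2:ℕ)) := by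
                apply pow_le_pow_right₀ (by norm_num) (by omega)
            _ ≤ y := h1
        have hMy : y/2 - 1 ≤ (M:ℝ) := by
          have hnat : N < (M + 1) * L := by
            rw [hM]
            exact (Nat.div_lt_iff_lt_mul (by omega)).mp (Nat.lt_succ_self (N / L))
          have hreal : (N:ℝ) < ((M:ℝ) + 1) * (L:ℝ) := by exact_mod_cast hnat
          have hLL : (L:ℝ) ≤ 2 * (N:ℝ) ^ e₁ := hLle
          have hdiv : (N:ℝ) / (2 * (N:ℝ) ^ e₁) ≤ (N:ℝ) / (L:ℝ) := by
            apply div_le_div_of_nonneg_left (by positivity) hLpos hLL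
          have hNr : (0:ℝ) < (N:ℝ) := by positivity
          have hsplit : (N:ℝ) ^ e₁ * y = (N:ℝ) := by
            rw [hy, ← Real.rpow_add hNr]
            rw [show e₁ + (1:ℝ)/((s+1:ℕ):ℝ) = 1 by
              rw [he₁]; push_cast; field_simp]
            exact Real.rpow_one _
          have hy' : y = (N:ℝ) / (N:ℝ) ^ e₁ := by
            rw [eq_div_iff (ne_of_gt hrpos)]
            linarith [hsplit]
          have hyid : (N:ℝ) / (2 * (N:ℝ) ^ e₁) = y / 2 := by
            rw [hy', div_div, mul_comm ((N:ℝ) ^ e₁) (2:ℝ)]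
          have hNL : (N:ℝ) / (L:ℝ) < (M:ℝ) + 1 := by
            rw [div_lt_iff₀ hLpos]
            exact hreal
          rw [hyid] at hdiv
          linarith
        have hMt : (M:ℝ) ≤ 3 * (t:ℝ) := by
          have : M ≤ 3 * t := by omega
          exact_mod_cast this
        have h9 : (9:ℝ) ≤ 3 ^ (s+1) := by
          calc (9:ℝ) = 3 ^ (2:ℕ) := by norm_num
            _ ≤ 3 ^ (s+1) := by
                apply pow_le_pow_right₀ (by norm_num) (by omega)
        have hyd : y / 3 ^ (s+1) ≤ y / 9 := by
          apply div_le_div_of_nonneg_left hypos.le (by norm_num) h9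
        refine ⟨0, ?_⟩
        have hregR : (t:ℝ) ≤ (regMax 2 (A 0) : ℝ) := by exact_mod_cast hreg
        linarith

/-- If `N ≥ 3^(r² + r)` and `{1, …, N}` is partitioned into `r` parts, then some
part satisfies `R_2(A_i) ≥ N^(1/r) / 3^r`. -/
theorem stmt3 (r N : ℕ) (hr : 0 < r) (hN : 3 ^ (r ^ 2 + r) ≤ N)
    (A : Fin r → Finset ℤ)
    (hdisj : ∀ i j, i ≠ j → Disjoint (A i) (A j))
    (hcover : Finset.univ.biUnion A = Finset.Icc (1 : ℤ) (N : ℤ)) :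
    ∃ i, (N : ℝ) ^ ((1 : ℝ) / r) / 3 ^ r ≤ (regMax 2 (A i) : ℝ) := by
  exact main r hr N hN 0 A hdisj (by rw [hcover]; norm_num)
end

section
/- Let N be a positive integer and δ ∈ (0,1] be such that N ≥ 3^(⌊2/δ⌋² + ⌊2/δ⌋). Suppose A ⊆ [N] satisfies |A| ≥ δN. Then R_2(A − A) ≥ N^(δ/2) / 3^(2/δ). -/
open scoped Classical Pointwise

/-- chain invariant package -/
lemma greedy_chain (D : Finset ℤ) (g Ub : ℤ) (hg : 1 ≤ g) (hUb : 0 ≤ Ub)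
    (hsyn : ∀ u : ℤ, 0 ≤ u → u ≤ Ub → ∃ d ∈ D, u ≤ d ∧ d ≤ u + g) :
    ∀ n : ℕ, 2 * g * (n : ℤ) ≤ Ub →
      ∃ B : Finset ℤ, B ⊆ D ∧ B.card = n + 1 ∧
        (∃ x ∈ B, (∀ b ∈ B, b ≤ x) ∧ 0 ≤ x ∧ x ≤ g + 2 * g * n) ∧
        (∀ a b : ℤ, ConsecIn B a b → g ≤ b - a ∧ b - a ≤ 2 * g) := by
  intro n
  induction n with
  | zero =>
    intro _
    obtain ⟨d, hd, hd0, hdg⟩ := hsyn 0 le_rfl hUb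
    refine ⟨{d}, by simpa using hd, by simp, ⟨d, by simp, by simp, hd0, by simpa using hdg⟩, ?_⟩
    rintro a b ⟨ha, hb, hab, -⟩
    simp only [Finset.mem_singleton] at ha hb
    omega
  | succ n ih =>
    intro hn
    have hn' : 2 * g * (n : ℤ) ≤ Ub := by push_cast at hn ⊢; nlinarith
    obtain ⟨B, hBD, hcard, ⟨x, hxB, hxmax, hx0, hxub⟩, hgap⟩ := ih hn'
    -- pick next point in [x+g, x+2g]
    have hux : (0:ℤ) ≤ x + g := by omega
    have huUb : x + g ≤ Ub := by push_cast at hn; nlinarith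
    obtain ⟨y, hyD, hy1, hy2⟩ := hsyn (x + g) hux huUb
    have hxy : x < y := by omega
    have hynB : y ∉ B := fun h => absurd (hxmax y h) (by omega)
    refine ⟨insert y B, ?_, ?_, ⟨y, Finset.mem_insert_self _ _, ?_, by omega, ?_⟩, ?_⟩
    · exact Finset.insert_subset hyD hBD
    · rw [Finset.card_insert_of_notMem hynB, hcard]
    · intro b hb
      rcases Finset.mem_insert.mp hb with rfl | hb
      · exact le_rfl
      · exact le_trans (hxmax b hb) (le_of_lt hxy)
    · push_cast; push_cast at hxub; nlinarith
    · rintro a b ⟨ha, hb, hab, hcons⟩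
      rcases Finset.mem_insert.mp hb with rfl | hbB
      · -- b = y : show a = x
        have haB : a ∈ B := by
          rcases Finset.mem_insert.mp ha with rfl | h
          · omega
          · exact h
        have hax : a = x := by
          have := hcons x (Finset.mem_insert_of_mem hxB)
          have := hxmax a haB
          omega
        subst hax
        omega
      · -- b ∈ B; a ∈ B too (a < b ≤ x < y)
        have hbx : b ≤ x := hxmax b hbB
        have haB : a ∈ B := by
          rcases Finset.mem_insert.mp ha with rfl | h
          · omega
          · exact h
        refine hgap a b ⟨haB, hbB, hab, ?_⟩
        intro c hc
        exact hcons c (Finset.mem_insert_of_mem hc)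

lemma greedy_regMax (D : Finset ℤ) (g Ub : ℤ) (n : ℕ) (hg : 1 ≤ g) (hUb : 0 ≤ Ub)
    (hn : 2 * g * (n : ℤ) ≤ Ub)
    (hsyn : ∀ u : ℤ, 0 ≤ u → u ≤ Ub → ∃ d ∈ D, u ≤ d ∧ d ≤ u + g) :
    n + 1 ≤ regMax 2 D := by
  obtain ⟨B, hBD, hcard, -, hgap⟩ := greedy_chain D g Ub hg hUb hsyn n hn
  have hreg : IsRegularSet 2 B := by
    refine ⟨(g : ℝ), by exact_mod_cast hg, ?_⟩
    intro a b h
    obtain ⟨h1, h2⟩ := hgap a b h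
    constructor
    · have : ((g : ℤ) : ℝ) ≤ ((b - a : ℤ) : ℝ) := by exact_mod_cast h1
      push_cast at this ⊢; linarith
    · have : ((b - a : ℤ) : ℝ) ≤ ((2 * g : ℤ) : ℝ) := by exact_mod_cast h2
      push_cast at this ⊢; linarith
  calc n + 1 = B.card := hcard.symm
    _ ≤ regMax 2 D := by
        apply Finset.le_sup
        simp only [Finset.mem_filter, Finset.mem_powerset]
        exact ⟨hBD, hreg⟩

lemma exists_lt_of_one_lt_card (A : Finset ℤ) (h2 : 1 < A.card) :
    ∃ u ∈ A, ∃ v ∈ A, u < v := by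
  obtain ⟨a, ha, b, hb, hab⟩ := Finset.one_lt_card.mp h2
  rcases lt_or_gt_of_ne hab with h | h
  · exact ⟨a, ha, b, hb, h⟩
  · exact ⟨b, hb, a, ha, h⟩

lemma regMax_ge_three (A : Finset ℤ) (h2 : 1 < A.card) : 3 ≤ regMax 2 (A - A) := by
  obtain ⟨u, hu, v, hv, huv⟩ := exists_lt_of_one_lt_card A h2
  set d : ℤ := v - u with hd
  have hd0 : 0 < d := by omega
  have hmem1 : -d ∈ A - A := by
    have : u - v ∈ A - A := Finset.sub_mem_sub hu hv
    simpa [hd] using this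
  have hmem2 : (0:ℤ) ∈ A - A := by
    have : u - u ∈ A - A := Finset.sub_mem_sub hu hu
    simpa using this
  have hmem3 : d ∈ A - A := Finset.sub_mem_sub hv hu
  set B : Finset ℤ := {-d, 0, d} with hB
  have hBsub : B ⊆ A - A := by
    intro x hx
    simp only [hB, Finset.mem_insert, Finset.mem_singleton] at hx
    rcases hx with rfl | rfl | rfl <;> assumption
  have hcard : B.card = 3 := by
    rw [hB]
    rw [Finset.card_insert_of_notMem (by simp; omega),
        Finset.card_insert_of_notMem (by simp; omega), Finset.card_singleton]
  have hreg : IsRegularSet 2 B := by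
    refine ⟨(d : ℝ), by exact_mod_cast hd0, ?_⟩
    rintro a b ⟨ha, hb, hab, hcons⟩
    have h0 := hcons 0 (by simp [hB])
    simp only [hB, Finset.mem_insert, Finset.mem_singleton] at ha hb
    have hba : b - a = d := by rcases ha with rfl | rfl | rfl <;> rcases hb with rfl | rfl | rfl <;> omega
    have : ((b - a : ℤ) : ℝ) = (d : ℝ) := by exact_mod_cast hba
    push_cast at this
    constructor <;> nlinarith [this, (by exact_mod_cast hd0 : (0:ℝ) < (d:ℝ))]
  calc (3:ℕ) = B.card := hcard.symm
    _ ≤ regMax 2 (A - A) := by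
        apply Finset.le_sup
        simp only [Finset.mem_filter, Finset.mem_powerset]
        exact ⟨hBsub, hreg⟩

lemma step_lemma (A : Finset ℤ) (T : ℝ) (ρ L M Y : ℤ)
    (hreg : ((regMax 2 (A - A) : ℕ) : ℝ) < T)
    (hρ1 : 24 * T + 32 ≤ (ρ : ℝ)) (hρ2 : (72:ℤ) ≤ ρ)
    (S : Finset ℤ) (hSA : S ⊆ A) (hS : S.Nonempty)
    (hL : L = S.max' hS - S.min' hS)
    (hM : M = L / ρ + 1) (hY : Y = L / 4) (hLρ : 2 * ρ ≤ L) :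
    ∃ t : ℤ,
      3 * (S.card : ℤ) * (M + 1) ≤ 2 * ((S ∩ Finset.Icc t (t + M)).card : ℤ) * (L + 1) := by
  have hρ0 : (0:ℤ) < ρ := by omega
  have hL0 : 0 < L := by omega
  have hq2 : 2 ≤ L / ρ := by
    rw [Int.le_ediv_iff_mul_le hρ0]; omega
  have hqr : ρ * (L / ρ) + L % ρ = L := Int.mul_ediv_add_emod L ρ
  have hr0 : 0 ≤ L % ρ := Int.emod_nonneg L (by omega)
  have hr1 : L % ρ < ρ := Int.emod_lt_of_pos L hρ0
  have hq0 : 0 ≤ L / ρ := by omega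
  have h72q : 72 * (L / ρ) ≤ ρ * (L / ρ) :=
    mul_le_mul_of_nonneg_right hρ2 hq0
  have hρM : ρ * M = ρ * (L / ρ) + ρ := by rw [hM]; ring
  have hρM1 : L + 1 ≤ ρ * M := by omega
  have hρM2 : ρ * M ≤ L + ρ := by omega
  have hM3 : 3 ≤ M := by omega
  have hM48 : 48 * M ≤ L := by omega
  have hY4a : 4 * Y ≤ L := by
    have h := Int.mul_ediv_add_emod L 4
    have h0 : 0 ≤ L % 4 := Int.emod_nonneg L (by norm_num)
    omega
  have hY4b : L ≤ 4 * Y + 3 := by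
    have h := Int.mul_ediv_add_emod L 4
    have h1 : L % 4 < 4 := Int.emod_lt_of_pos L (by norm_num)
    omega
  have hMY : M ≤ Y := by omega
  by_cases hbad : ∃ v : ℤ, M ≤ v ∧ v ≤ Y ∧ (A - A) ∩ Finset.Icc (v - M) (v + M) = ∅
  · -- bad v exists: measure/double-counting argument
    obtain ⟨v, hvM, hvY, hvempty⟩ := hbad
    set C : Finset ℤ := S + Finset.Icc (0:ℤ) M with hCdef
    set C' : Finset ℤ := C.image (· + v) with hC'def
    have hC'card : C'.card = C.card := Finset.card_image_of_injective C (add_left_injective v)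
    have hdisj : Disjoint C C' := by
      rw [Finset.disjoint_left]
      intro x hxC hxC'
      obtain ⟨s, hs, e, he, hse⟩ := Finset.mem_add.mp hxC
      obtain ⟨w, hwC, hwv⟩ := Finset.mem_image.mp hxC'
      obtain ⟨s', hs', e', he', hse'⟩ := Finset.mem_add.mp hwC
      simp only [Finset.mem_Icc] at he he'
      have hmem : s - s' ∈ (A - A) ∩ Finset.Icc (v - M) (v + M) := by
        refine Finset.mem_inter.mpr ⟨Finset.sub_mem_sub (hSA hs) (hSA hs'), ?_⟩
        simp only [Finset.mem_Icc]
        omega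
      rw [hvempty] at hmem
      exact Finset.notMem_empty _ hmem
    have hCne : C.Nonempty := by
      obtain ⟨s, hs⟩ := hS
      exact ⟨s + 0, Finset.mem_add.mpr ⟨s, hs, 0, by simp [Finset.mem_Icc]; omega, rfl⟩⟩
    have hUnion : C ∪ C' ⊆ Finset.Icc (S.min' hS) (S.max' hS + M + v) := by
      intro x hx
      simp only [Finset.mem_Icc]
      rcases Finset.mem_union.mp hx with hxC | hxC'
      · obtain ⟨s, hs, e, he, hse⟩ := Finset.mem_add.mp hxC
        simp only [Finset.mem_Icc] at he
        have h1 := S.min'_le s hs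
        have h2 := S.le_max' s hs
        omega
      · obtain ⟨w, hwC, hwv⟩ := Finset.mem_image.mp hxC'
        obtain ⟨s, hs, e, he, hse⟩ := Finset.mem_add.mp hwC
        simp only [Finset.mem_Icc] at he
        have h1 := S.min'_le s hs
        have h2 := S.le_max' s hs
        omega
    have hCunion : 2 * (C.card : ℤ) ≤ L + M + v + 1 := by
      have h1 : (C ∪ C').card = C.card + C'.card := Finset.card_union_of_disjoint hdisj
      have h2 : (C ∪ C').card ≤ (Finset.Icc (S.min' hS) (S.max' hS + M + v)).card :=
        Finset.card_le_card hUnion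
      rw [Int.card_Icc] at h2
      have h3 : ((S.max' hS + M + v + 1 - S.min' hS).toNat : ℤ) = L + M + v + 1 := by
        rw [Int.toNat_of_nonneg (by omega)]; omega
      have h4 : ((C ∪ C').card : ℤ) ≤ L + M + v + 1 := by
        calc ((C ∪ C').card : ℤ) ≤ ((S.max' hS + M + v + 1 - S.min' hS).toNat : ℤ) := by
              exact_mod_cast h2
          _ = L + M + v + 1 := h3
      rw [h1] at h4
      push_cast at h4
      omega
    -- double counting
    by_contra hcon
    push_neg at hcon
    have hcon' : ∀ t : ℤ, 2 * ((S ∩ Finset.Icc t (t + M)).card : ℤ) * (L + 1) <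
        3 * (S.card : ℤ) * (M + 1) := by
      intro t
      have := hcon t
      omega
    have hkey : (S.card : ℤ) * (M + 1) =
        ∑ c ∈ C, (((S ×ˢ Finset.Icc (0:ℤ) M).filter fun p => p.1 + p.2 = c).card : ℤ) := by
      have h2 : ((S ×ˢ Finset.Icc (0:ℤ) M).card : ℤ) = (S.card : ℤ) * (M + 1) := by
        rw [Finset.card_product, Int.card_Icc]
        push_cast [Int.toNat_of_nonneg (show (0:ℤ) ≤ M + 1 - 0 by omega)]
        ring
      have h1 : (S ×ˢ Finset.Icc (0:ℤ) M).card =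
          ∑ c ∈ C, ((S ×ˢ Finset.Icc (0:ℤ) M).filter fun p => p.1 + p.2 = c).card := by
        apply Finset.card_eq_sum_card_fiberwise
        intro p hp
        rw [Finset.mem_coe, Finset.mem_product] at hp
        exact Finset.mem_coe.mpr (Finset.mem_add.mpr ⟨p.1, hp.1, p.2, hp.2, rfl⟩)
      rw [← h2]
      exact_mod_cast h1
    have hfib : ∀ c ∈ C, (((S ×ˢ Finset.Icc (0:ℤ) M).filter fun p => p.1 + p.2 = c).card : ℤ) ≤
        ((S ∩ Finset.Icc (c - M) c).card : ℤ) := by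
      intro c _
      have hcard : ((S ×ˢ Finset.Icc (0:ℤ) M).filter fun p => p.1 + p.2 = c).card ≤
          (S ∩ Finset.Icc (c - M) c).card := by
        apply Finset.card_le_card_of_injOn (fun p => p.1)
        · intro p hp
          simp only [Finset.mem_coe, Finset.mem_filter, Finset.mem_product, Finset.mem_Icc] at hp
          simp only [Finset.mem_coe, Finset.mem_inter, Finset.mem_Icc]
          obtain ⟨⟨hp1, hp2a, hp2b⟩, hpc⟩ := hp
          exact ⟨hp1, by omega, by omega⟩
        · intro p hp w hw hpw
          simp only [Finset.mem_coe, Finset.mem_filter] at hp hw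
          have hpw' : p.1 = w.1 := hpw
          have h1 : p.1 + p.2 = c := hp.2
          have h2 : w.1 + w.2 = c := hw.2
          exact Prod.ext hpw' (by omega)
      exact_mod_cast hcard
    have hsum1 : (S.card : ℤ) * (M + 1) ≤ ∑ c ∈ C, ((S ∩ Finset.Icc (c - M) c).card : ℤ) := by
      rw [hkey]
      exact Finset.sum_le_sum hfib
    have hsum2 : ∑ c ∈ C, 2 * ((S ∩ Finset.Icc (c - M) c).card : ℤ) * (L + 1) <
        ∑ c ∈ C, 3 * (S.card : ℤ) * (M + 1) := by
      apply Finset.sum_lt_sum_of_nonempty hCne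
      intro c _
      have h := hcon' (c - M)
      have heq : (c - M) + M = c := by ring
      rw [heq] at h
      exact h
    have e1 : ∑ c ∈ C, 2 * ((S ∩ Finset.Icc (c - M) c).card : ℤ) * (L + 1)
        = 2 * (L + 1) * ∑ c ∈ C, ((S ∩ Finset.Icc (c - M) c).card : ℤ) := by
      rw [Finset.mul_sum]
      exact Finset.sum_congr rfl (fun c _ => by ring)
    have e2 : ∑ c ∈ C, 3 * (S.card : ℤ) * (M + 1) = 3 * (S.card : ℤ) * (M + 1) * (C.card : ℤ) := by
      rw [Finset.sum_const, nsmul_eq_mul]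
      ring
    have hsum3 : 2 * (L + 1) * ((S.card : ℤ) * (M + 1)) <
        3 * (S.card : ℤ) * (M + 1) * (C.card : ℤ) := by
      have h := hsum2
      rw [e1, e2] at h
      have hL1 : (0:ℤ) ≤ 2 * (L + 1) := by omega
      calc 2 * (L + 1) * ((S.card : ℤ) * (M + 1))
          ≤ 2 * (L + 1) * ∑ c ∈ C, ((S ∩ Finset.Icc (c - M) c).card : ℤ) :=
            mul_le_mul_of_nonneg_left hsum1 hL1
        _ < 3 * (S.card : ℤ) * (M + 1) * (C.card : ℤ) := h
    have hm1 : 1 ≤ (S.card : ℤ) := by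
      have h := Finset.card_pos.mpr hS
      exact_mod_cast h
    have hC2 : 2 * (L + 1) < 3 * (C.card : ℤ) := by
      by_contra hc
      push_neg at hc
      have hmm : (0:ℤ) ≤ (S.card : ℤ) * (M + 1) := by
        apply mul_nonneg
        · omega
        · omega
      have h := mul_le_mul_of_nonneg_right hc hmm
      nlinarith [hsum3, h]
    omega
  · -- no bad v: syndetic, greedy wins, contradiction with hreg
    exfalso
    push_neg at hbad
    have hT0 : 0 ≤ T := le_trans (Nat.cast_nonneg _) (le_of_lt hreg)
    set n : ℕ := ⌈T⌉₊ with hndef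
    have hsyn : ∀ u : ℤ, 0 ≤ u → u ≤ Y - M → ∃ d ∈ A - A, u ≤ d ∧ d ≤ u + 2 * M := by
      intro u hu0 huY
      have h := hbad (u + M) (by omega) (by omega)
      rcases Finset.eq_empty_or_nonempty ((A - A) ∩ Finset.Icc (u + M - M) (u + M + M)) with he | hne
      · exact absurd he (Finset.nonempty_iff_ne_empty.mp h)
      · obtain ⟨d, hd⟩ := hne
        rw [Finset.mem_inter, Finset.mem_Icc] at hd
        exact ⟨d, hd.1, by omega, by omega⟩
    have hnT : (n : ℝ) ≤ T + 1 := le_of_lt (Nat.ceil_lt_add_one hT0)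
    have hcount : 2 * (2 * M) * (n : ℤ) ≤ Y - M := by
      have hMr : (0:ℝ) < (M:ℝ) := by exact_mod_cast (show (0:ℤ) < M by omega)
      have hMρr : (ρ:ℝ) * (M:ℝ) ≤ (L:ℝ) + (ρ:ℝ) := by exact_mod_cast hρM2
      have hLρr : 2 * (ρ:ℝ) ≤ (L:ℝ) := by exact_mod_cast hLρ
      have hYr : 3 * (L:ℝ) - 9 ≤ 12 * (Y:ℝ) := by
        have h : (L:ℝ) ≤ 4 * (Y:ℝ) + 3 := by exact_mod_cast hY4b
        linarith
      have hM3r : (3:ℝ) ≤ (M:ℝ) := by exact_mod_cast hM3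
      have hstep : 4 * (n:ℝ) ≤ ((ρ:ℝ) - 8) / 6 := by linarith
      have h1 : (M:ℝ) * (4 * (n:ℝ)) ≤ (M:ℝ) * (((ρ:ℝ) - 8) / 6) :=
        mul_le_mul_of_nonneg_left hstep (le_of_lt hMr)
      have h2 : (M:ℝ) * (((ρ:ℝ) - 8) / 6) ≤ (Y:ℝ) - (M:ℝ) := by
        have expand : (M:ℝ) * (((ρ:ℝ) - 8) / 6) = ((ρ:ℝ) * (M:ℝ) - 8 * M) / 6 := by ring
        rw [expand]
        linarith
      have hreal : ((2 * (2 * M) * (n : ℤ) : ℤ) : ℝ) ≤ ((Y - M : ℤ) : ℝ) := by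
        push_cast
        nlinarith [h1, h2]
      exact_mod_cast hreal
    have hge := greedy_regMax (A - A) (2 * M) (Y - M) n (by omega) (by omega) hcount hsyn
    have hfin : T ≤ ((regMax 2 (A - A) : ℕ) : ℝ) := by
      calc T ≤ (n : ℝ) := Nat.le_ceil T
        _ ≤ ((n + 1 : ℕ) : ℝ) := by push_cast; linarith
        _ ≤ ((regMax 2 (A - A) : ℕ) : ℝ) := by exact_mod_cast hge
    linarith

lemma card_le_span (S : Finset ℤ) (hS : S.Nonempty) :
    (S.card : ℤ) ≤ S.max' hS - S.min' hS + 1 := by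
  have hsub : S ⊆ Finset.Icc (S.min' hS) (S.max' hS) :=
    fun s hs => Finset.mem_Icc.mpr ⟨S.min'_le s hs, S.le_max' s hs⟩
  have h1 := Finset.card_le_card hsub
  rw [Int.card_Icc] at h1
  have hmm : S.min' hS ≤ S.max' hS := S.min'_le _ (S.max'_mem hS)
  have h2 : ((S.max' hS + 1 - S.min' hS).toNat : ℤ) = S.max' hS - S.min' hS + 1 := by
    rw [Int.toNat_of_nonneg (by omega)]; ring
  calc (S.card : ℤ) ≤ ((S.max' hS + 1 - S.min' hS).toNat : ℤ) := by exact_mod_cast h1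
    _ = _ := h2

lemma ind_lemma (A : Finset ℤ) (T : ℝ) (ρ : ℤ)
    (hreg : ((regMax 2 (A - A) : ℕ) : ℝ) < T)
    (hρ1 : 24 * T + 32 ≤ (ρ : ℝ)) (hρ2 : (72:ℤ) ≤ ρ) :
    ∀ j : ℕ, ∀ S : Finset ℤ, S ⊆ A → ∀ hS : S.Nonempty,
      3^j * (S.card : ℤ) ≤
        max (2^j * ((S.max' hS - S.min' hS) + 1)) (3^j * 2 * ρ^j) := by
  intro j
  induction j with
  | zero =>
    intro S hSA hS
    apply le_max_of_le_left
    simpa using card_le_span S hS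
  | succ j ih =>
    intro S hSA hS
    set L : ℤ := S.max' hS - S.min' hS with hLdef
    by_cases hsmall : L + 1 ≤ 2 * ρ^(j+1)
    · -- small span: right branch
      apply le_max_of_le_right
      have h1 : (S.card : ℤ) ≤ L + 1 := card_le_span S hS
      have h2 : (3:ℤ)^(j+1) > 0 := by positivity
      calc (3:ℤ)^(j+1) * (S.card : ℤ) ≤ 3^(j+1) * (2 * ρ^(j+1)) := by
            apply mul_le_mul_of_nonneg_left _ (le_of_lt h2)
            omega
        _ = 3^(j+1) * 2 * ρ^(j+1) := by ring
    · push_neg at hsmall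
      have hρ0 : (0:ℤ) < ρ := by omega
      have hρpow : (ρ:ℤ) ≤ ρ^(j+1) := le_self_pow₀ (by omega) (by omega)
      have hLρ : 2 * ρ ≤ L := by nlinarith
      set M : ℤ := L / ρ + 1 with hMdef
      -- basic facts about M
      have hq2 : 2 ≤ L / ρ := by rw [Int.le_ediv_iff_mul_le hρ0]; nlinarith
      have hqr : ρ * (L / ρ) + L % ρ = L := Int.mul_ediv_add_emod L ρ
      have hr0 : 0 ≤ L % ρ := Int.emod_nonneg L (by omega)
      have hr1 : L % ρ < ρ := Int.emod_lt_of_pos L hρ0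
      have hρM : ρ * M = ρ * (L / ρ) + ρ := by rw [hMdef]; ring
      have hρM1 : L + 1 ≤ ρ * M := by omega
      have hM3 : 3 ≤ M := by omega
      obtain ⟨t, hstep⟩ := step_lemma A T ρ L M (L / 4) hreg hρ1 hρ2 S hSA hS hLdef hMdef rfl hLρ
      set S' : Finset ℤ := S ∩ Finset.Icc t (t + M) with hS'def
      have hm1 : (1:ℤ) ≤ (S.card : ℤ) := by
        exact_mod_cast Finset.card_pos.mpr hS
      have hm'pos : 0 < (S'.card : ℤ) := by
        rcases Nat.eq_zero_or_pos S'.card with h0 | hpos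
        · exfalso; rw [h0] at hstep; push_cast at hstep; nlinarith
        · exact_mod_cast hpos
      have hS' : S'.Nonempty := Finset.card_pos.mp (by exact_mod_cast hm'pos)
      have hS'A : S' ⊆ A := fun x hx => hSA (Finset.mem_of_mem_inter_left hx)
      have hspan' : S'.max' hS' - S'.min' hS' ≤ M := by
        have h1 : S'.max' hS' ≤ t + M := by
          apply Finset.max'_le
          intro y hy
          have := Finset.mem_of_mem_inter_right hy
          rw [Finset.mem_Icc] at this
          exact this.2
        have h2 : t ≤ S'.min' hS' := by
          apply Finset.le_min'
          intro y hy
          have := Finset.mem_of_mem_inter_right hy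
          rw [Finset.mem_Icc] at this
          exact this.1
        omega
      have hIH := ih S' hS'A hS'
      rcases le_max_iff.mp hIH with hA | hB
      · -- case A
        apply le_max_of_le_left
        have hA' : 3^j * (S'.card : ℤ) ≤ 2^j * (M + 1) := by
          calc 3^j * (S'.card : ℤ) ≤ 2^j * ((S'.max' hS' - S'.min' hS') + 1) := hA
            _ ≤ 2^j * (M + 1) := by
                apply mul_le_mul_of_nonneg_left _ (by positivity)
                omega
        have hM1pos : (0:ℤ) < M + 1 := by omega
        have key : ((3:ℤ)^(j+1) * (S.card : ℤ)) * (M + 1) ≤ (2^(j+1) * (L + 1)) * (M + 1) := by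
          calc ((3:ℤ)^(j+1) * (S.card : ℤ)) * (M + 1)
              = 3^j * (3 * (S.card : ℤ) * (M + 1)) := by ring
            _ ≤ 3^j * (2 * (S'.card : ℤ) * (L + 1)) := by
                apply mul_le_mul_of_nonneg_left hstep (by positivity)
            _ = (3^j * (S'.card : ℤ)) * (2 * (L + 1)) := by ring
            _ ≤ (2^j * (M + 1)) * (2 * (L + 1)) := by
                apply mul_le_mul_of_nonneg_right hA'
                omega
            _ = (2^(j+1) * (L + 1)) * (M + 1) := by ring
        exact le_of_mul_le_mul_right key hM1pos
      · -- case B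
        apply le_max_of_le_right
        have h3j : (0:ℤ) < 3^j := by positivity
        have hB' : (S'.card : ℤ) ≤ 2 * ρ^j := by
          have h := hB
          have heq : (3:ℤ)^j * 2 * ρ^j = 3^j * (2 * ρ^j) := by ring
          rw [heq] at h
          exact le_of_mul_le_mul_left h h3j
        have hM1pos : (0:ℤ) < M + 1 := by omega
        have hρj : (0:ℤ) ≤ ρ^j := by positivity
        have key : (3 * (S.card : ℤ)) * (M + 1) ≤ (4 * ρ^(j+1)) * (M + 1) := by
          calc (3 * (S.card : ℤ)) * (M + 1) = 3 * (S.card : ℤ) * (M + 1) := by ring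
            _ ≤ 2 * (S'.card : ℤ) * (L + 1) := hstep
            _ ≤ 2 * (2 * ρ^j) * (L + 1) := by
                apply mul_le_mul_of_nonneg_right _ (by omega)
                nlinarith
            _ ≤ 2 * (2 * ρ^j) * (ρ * M) := by
                apply mul_le_mul_of_nonneg_left _ (by positivity)
                omega
            _ ≤ (4 * ρ^(j+1)) * (M + 1) := by
                have hMM : M ≤ M + 1 := by omega
                have e : 2 * (2 * ρ^j) * (ρ * M) = (4 * ρ^(j+1)) * M := by ring
                rw [e]
                apply mul_le_mul_of_nonneg_left hMM (by positivity)
        have h34 : 3 * (S.card : ℤ) ≤ 4 * ρ^(j+1) := le_of_mul_le_mul_right key hM1pos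
        have hfin : (S.card : ℤ) ≤ 2 * ρ^(j+1) := by omega
        calc (3:ℤ)^(j+1) * (S.card : ℤ) ≤ 3^(j+1) * (2 * ρ^(j+1)) := by
              apply mul_le_mul_of_nonneg_left hfin (by positivity)
          _ = 3^(j+1) * 2 * ρ^(j+1) := by ring

lemma natA (m : ℕ) : (m+2)*2^m ≤ 2*3^m := by
  induction m with
  | zero => norm_num
  | succ m ih =>
    calc (m+1+2)*2^(m+1) = (2*(m+3))*2^m := by ring
      _ ≤ (3*(m+2))*2^m := Nat.mul_le_mul_right _ (by omega)
      _ = 3*((m+2)*2^m) := by ring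
      _ ≤ 3*(2*3^m) := Nat.mul_le_mul_left _ ih
      _ = 2*3^(m+1) := by ring

lemma natB : ∀ m : ℕ, 1 ≤ m → (m+2)*45^m ≤ 3^((m+1)^2+1) := by
  intro m
  induction m with
  | zero => omega
  | succ m ih =>
    intro _
    rcases Nat.eq_zero_or_pos m with rfl | hm
    · norm_num
    · have ih' := ih hm
      have hexp : (m+1)^2 + 1 + 5 ≤ (m+1+1)^2 + 1 := by nlinarith
      calc (m+1+2)*45^(m+1) = (45*(m+3))*45^m := by ring
        _ ≤ (90*(m+2))*45^m := Nat.mul_le_mul_right _ (by omega)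
        _ = 90*((m+2)*45^m) := by ring
        _ ≤ 90*3^((m+1)^2+1) := Nat.mul_le_mul_left _ ih'
        _ ≤ 243*3^((m+1)^2+1) := Nat.mul_le_mul_right _ (by norm_num)
        _ = 3^((m+1)^2+1+5) := by rw [pow_add]; ring
        _ ≤ 3^((m+1+1)^2+1) := Nat.pow_le_pow_right (by norm_num) hexp

lemma natD (k : ℕ) (h : 1 ≤ k) : k + 1 + k * (k-1) = k^2 + 1 := by
  obtain ⟨j, rfl⟩ := Nat.exists_eq_add_of_le h
  simp only [Nat.add_sub_cancel_left]
  ring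

lemma natC (k : ℕ) : k + 1 ≤ 3^(k^2+k) := by
  have h1 : k < 2^k := Nat.lt_two_pow_self
  have h1' : (2:ℕ)^k ≤ 3^k := Nat.pow_le_pow_left (by norm_num) k
  have h2 : (3:ℕ)^k ≤ 3^(k^2+k) := Nat.pow_le_pow_right (by norm_num) (by nlinarith)
  omega

set_option maxHeartbeats 1000000 in
/-- If `N ≥ 3^(⌊2/δ⌋² + ⌊2/δ⌋)` and `A ⊆ {1, …, N}` has `|A| ≥ δN`, then
`R_2(A − A) ≥ N^(δ/2) / 3^(2/δ)`. -/
theorem stmt4 (N : ℕ) (hN : 0 < N) (δ : ℝ) (hδ0 : 0 < δ) (hδ1 : δ ≤ 1)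
    (hNbig : 3 ^ (⌊2 / δ⌋₊ ^ 2 + ⌊2 / δ⌋₊) ≤ N)
    (A : Finset ℤ) (hA : A ⊆ Finset.Icc (1 : ℤ) (N : ℤ))
    (hcard : δ * (N : ℝ) ≤ (A.card : ℝ)) :
    (N : ℝ) ^ (δ / 2) / 3 ^ (2 / δ) ≤ (regMax 2 (A - A) : ℝ) := by
  obtain ⟨k, hkdef⟩ : ∃ k : ℕ, k = ⌊2 / δ⌋₊ := ⟨_, rfl⟩
  rw [← hkdef] at hNbig
  obtain ⟨T, hTdef⟩ : ∃ T : ℝ, T = (N : ℝ) ^ (δ / 2) / 3 ^ (2 / δ) := ⟨_, rfl⟩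
  rw [← hTdef]
  have hk2 : 2 ≤ k := by
    rw [hkdef]
    apply Nat.le_floor
    rw [le_div_iff₀ hδ0]
    push_cast
    linarith
  have hk0 : (0:ℝ) < (k:ℝ) := by exact_mod_cast (show 0 < k by omega)
  have hk2R : (2:ℝ) ≤ (k:ℝ) := by exact_mod_cast hk2
  have hδk : (k:ℝ) ≤ 2/δ := by
    rw [hkdef]
    exact Nat.floor_le (by positivity)
  have hδk1 : 2/δ < (k:ℝ) + 1 := by
    rw [hkdef]
    exact Nat.lt_floor_add_one _
  have hδlow : 2 < δ * ((k:ℝ)+1) := by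
    rw [div_lt_iff₀ hδ0] at hδk1
    linarith
  have hδhigh : δ * (k:ℝ) ≤ 2 := by
    rw [le_div_iff₀ hδ0] at hδk
    linarith
  have hNpos : (0:ℝ) < (N:ℝ) := by exact_mod_cast hN
  have hN1 : (1:ℝ) ≤ (N:ℝ) := by exact_mod_cast hN
  have hNbigR : ((3:ℝ))^(k^2+k) ≤ (N:ℝ) := by exact_mod_cast hNbig
  have hNk1 : ((k:ℝ)+1) ≤ (N:ℝ) := by
    have h1 := natC k
    calc ((k:ℝ)+1) = ((k+1 : ℕ):ℝ) := by push_cast; ring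
      _ ≤ ((3^(k^2+k) : ℕ) : ℝ) := by exact_mod_cast h1
      _ ≤ (N:ℝ) := by exact_mod_cast hNbig
  have hδN2 : 2 < δ * (N:ℝ) := by
    have h1 : δ * ((k:ℝ)+1) ≤ δ * (N:ℝ) := mul_le_mul_of_nonneg_left hNk1 (le_of_lt hδ0)
    linarith
  have hAcard2 : 1 < A.card := by
    have h1 : (2:ℝ) < (A.card:ℝ) := lt_of_lt_of_le hδN2 hcard
    have h2 : (2:ℕ) < A.card := by exact_mod_cast h1
    omega
  by_cases hT3 : T ≤ 3
  · have h3 := regMax_ge_three A hAcard2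
    have h3R : (3:ℝ) ≤ ((regMax 2 (A - A) : ℕ) : ℝ) := by exact_mod_cast h3
    linarith
  · push_neg at hT3
    by_contra hcon
    push_neg at hcon
    obtain ⟨ρ, hρdef⟩ : ∃ ρ : ℤ, ρ = 25 * (⌈T⌉₊ : ℤ) + 35 := ⟨_, rfl⟩
    have hT0 : (0:ℝ) < T := by linarith
    have hceil1 : T ≤ (⌈T⌉₊ : ℝ) := Nat.le_ceil T
    have hceil2 : (⌈T⌉₊ : ℝ) < T + 1 := Nat.ceil_lt_add_one (le_of_lt hT0)
    have hρcast : (ρ:ℝ) = 25 * (⌈T⌉₊ : ℝ) + 35 := by rw [hρdef]; push_cast; ring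
    have hρ1 : 24 * T + 32 ≤ (ρ:ℝ) := by rw [hρcast]; linarith
    have hρ2 : (72:ℤ) ≤ ρ := by
      have h1 : (3:ℝ) < (⌈T⌉₊:ℝ) := lt_of_lt_of_le hT3 hceil1
      have h2 : (3:ℕ) < ⌈T⌉₊ := by exact_mod_cast h1
      omega
    have hρT : (ρ:ℝ) ≤ 45 * T := by rw [hρcast]; linarith
    have hρ0R : (0:ℝ) ≤ (ρ:ℝ) := by
      have : (0:ℤ) ≤ ρ := by omega
      exact_mod_cast this
    have hAne : A.Nonempty := Finset.card_pos.mp (by omega)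
    have hmaxA : A.max' hAne ≤ (N:ℤ) := by
      have hmem := A.max'_mem hAne
      have h := hA hmem
      rw [Finset.mem_Icc] at h
      exact h.2
    have hminA : 1 ≤ A.min' hAne := by
      have hmem := A.min'_mem hAne
      have h := hA hmem
      rw [Finset.mem_Icc] at h
      exact h.1
    have hspanA : A.max' hAne - A.min' hAne + 1 ≤ (N:ℤ) := by omega
    obtain ⟨m, hmdef⟩ : ∃ m : ℕ, m = k - 1 := ⟨_, rfl⟩
    have hm1 : 1 ≤ m := by omega
    have hmk : m + 1 = k := by omega
    have hmcast : (m:ℝ) = (k:ℝ) - 1 := by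
      have : ((m:ℕ):ℝ) + 1 = ((m+1:ℕ):ℝ) := by push_cast; ring
      rw [hmk] at this
      linarith
    have hind := ind_lemma A T ρ hcon hρ1 hρ2 m A Finset.Subset.rfl hAne
    rcases le_max_iff.mp hind with hl | hr
    · -- left branch
      have hlZ : (3:ℤ)^m * (A.card:ℤ) ≤ 2^m * (N:ℤ) := by
        calc (3:ℤ)^m * (A.card:ℤ) ≤ 2^m * ((A.max' hAne - A.min' hAne) + 1) := hl
          _ ≤ 2^m * (N:ℤ) := mul_le_mul_of_nonneg_left hspanA (by positivity)
      have hlR : (3:ℝ)^m * (A.card:ℝ) ≤ (2:ℝ)^m * (N:ℝ) := by exact_mod_cast hlZ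
      have hAcast : ((k:ℝ)+1) * (2:ℝ)^m ≤ 2 * (3:ℝ)^m := by
        have h1 := natA m
        have h2 : ((m+2:ℕ):ℝ) * (2:ℝ)^m ≤ 2 * (3:ℝ)^m := by exact_mod_cast h1
        have h3 : ((m+2:ℕ):ℝ) = (k:ℝ)+1 := by push_cast; linarith [hmcast]
        rwa [h3] at h2
      have h2m : (0:ℝ) < (2:ℝ)^m := by positivity
      have h3m : (0:ℝ) < (3:ℝ)^m := by positivity
      have hkey : (2:ℝ)^m < δ * (3:ℝ)^m := by
        have e1 : 2*(3:ℝ)^m < (δ*((k:ℝ)+1))*(3:ℝ)^m := by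
          apply mul_lt_mul_of_pos_right hδlow h3m
        have e2 : ((k:ℝ)+1) * (2:ℝ)^m < ((k:ℝ)+1) * (δ * (3:ℝ)^m) := by
          calc ((k:ℝ)+1) * (2:ℝ)^m ≤ 2*(3:ℝ)^m := hAcast
            _ < (δ*((k:ℝ)+1))*(3:ℝ)^m := e1
            _ = ((k:ℝ)+1) * (δ * (3:ℝ)^m) := by ring
        exact lt_of_mul_lt_mul_left e2 (by linarith)
      have e2 : (3:ℝ)^m * (δ*(N:ℝ)) ≤ (3:ℝ)^m * (A.card:ℝ) :=
        mul_le_mul_of_nonneg_left hcard (le_of_lt h3m)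
      have e3 : (2:ℝ)^m * (N:ℝ) < (δ*(3:ℝ)^m)*(N:ℝ) :=
        mul_lt_mul_of_pos_right hkey hNpos
      nlinarith [e2, e3, hlR]
    · -- right branch
      have hcardρ : (A.card : ℝ) ≤ 2 * (ρ:ℝ)^m := by
        have h0 : (3:ℤ)^m * (A.card:ℤ) ≤ (3:ℤ)^m * (2 * ρ^m) := by
          calc (3:ℤ)^m * (A.card:ℤ) ≤ 3^m * 2 * ρ^m := hr
            _ = 3^m * (2 * ρ^m) := by ring
        have h1 : (A.card:ℤ) ≤ 2 * ρ^m := le_of_mul_le_mul_left h0 (by positivity)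
        exact_mod_cast h1
      have hρpow : (ρ:ℝ)^m ≤ 45^m * T^m := by
        calc (ρ:ℝ)^m ≤ (45*T)^m := pow_le_pow_left₀ hρ0R hρT m
          _ = 45^m * T^m := mul_pow _ _ _
      have h3δpos : (0:ℝ) < (3:ℝ)^(2/δ) := Real.rpow_pos_of_pos (by norm_num) _
      have hTm : T^m = (N:ℝ)^(δ/2*(m:ℝ)) / (3:ℝ)^(2/δ*(m:ℝ)) := by
        rw [hTdef, div_pow, ← Real.rpow_natCast ((N:ℝ)^(δ/2)) m,
            ← Real.rpow_natCast ((3:ℝ)^(2/δ)) m, ← Real.rpow_mul (le_of_lt hNpos),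
            ← Real.rpow_mul (by norm_num)]
      have hnum : (N:ℝ)^(δ/2*(m:ℝ)) ≤ (N:ℝ)^(1 - 1/(k:ℝ)) := by
        apply Real.rpow_le_rpow_of_exponent_le hN1
        rw [hmcast]
        have h1 : δ/2 ≤ 1/(k:ℝ) := by
          rw [div_le_div_iff₀ (by norm_num) hk0]
          linarith
        have h2 : (0:ℝ) ≤ (k:ℝ) - 1 := by linarith
        calc δ/2*((k:ℝ)-1) ≤ 1/(k:ℝ)*((k:ℝ)-1) := mul_le_mul_of_nonneg_right h1 h2
          _ = 1 - 1/(k:ℝ) := by field_simp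
      have hNsplit : (N:ℝ)^(1 - 1/(k:ℝ)) = (N:ℝ) / (N:ℝ)^(1/(k:ℝ)) := by
        rw [Real.rpow_sub hNpos, Real.rpow_one]
      have hroot : ((3:ℝ))^((k+1 : ℕ)) ≤ (N:ℝ)^(1/(k:ℝ)) := by
        have h1 : ((3:ℝ)^((k^2+k : ℕ)))^(1/(k:ℝ)) ≤ (N:ℝ)^(1/(k:ℝ)) := by
          apply Real.rpow_le_rpow (by positivity) _ (by positivity)
          exact_mod_cast hNbigR
        have heq : ((k^2+k : ℕ):ℝ) * (1/(k:ℝ)) = ((k+1:ℕ):ℝ) := by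
          push_cast
          field_simp
        rwa [← Real.rpow_natCast (3:ℝ) (k^2+k), ← Real.rpow_mul (by norm_num), heq,
             Real.rpow_natCast] at h1
      have hden : ((3:ℝ))^((k*(k-1) : ℕ)) ≤ (3:ℝ)^(2/δ*(m:ℝ)) := by
        rw [← Real.rpow_natCast (3:ℝ) (k*(k-1))]
        apply Real.rpow_le_rpow_of_exponent_le (by norm_num)
        rw [hmcast]
        have h2 : (0:ℝ) ≤ (k:ℝ) - 1 := by linarith
        have h3 : ((k*(k-1) : ℕ):ℝ) = (k:ℝ) * ((k:ℝ)-1) := by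
          push_cast [Nat.cast_sub (show 1 ≤ k by omega)]
          ring
        rw [h3]
        exact mul_le_mul_of_nonneg_right hδk h2
      have hP : (0:ℝ) < (N:ℝ)^(1/(k:ℝ)) := Real.rpow_pos_of_pos hNpos _
      have h3k1 : (0:ℝ) < (3:ℝ)^((k+1:ℕ)) := by positivity
      have h3kk : (0:ℝ) < (3:ℝ)^((k*(k-1):ℕ)) := by positivity
      have hTm2 : T^m ≤ (N:ℝ) / ((3:ℝ)^((k+1:ℕ)) * (3:ℝ)^((k*(k-1):ℕ))) := by
        rw [hTm]
        calc (N:ℝ)^(δ/2*(m:ℝ)) / (3:ℝ)^(2/δ*(m:ℝ))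
            ≤ (N:ℝ)^(1 - 1/(k:ℝ)) / (3:ℝ)^((k*(k-1):ℕ)) := by
              apply div_le_div₀ (by positivity) hnum h3kk hden
          _ = ((N:ℝ) / (N:ℝ)^(1/(k:ℝ))) / (3:ℝ)^((k*(k-1):ℕ)) := by rw [hNsplit]
          _ ≤ ((N:ℝ) / (3:ℝ)^((k+1:ℕ))) / (3:ℝ)^((k*(k-1):ℕ)) := by
              gcongr
          _ = (N:ℝ) / ((3:ℝ)^((k+1:ℕ)) * (3:ℝ)^((k*(k-1):ℕ))) := by
              rw [div_div]
      have hpowmerge : (3:ℝ)^((k+1:ℕ)) * (3:ℝ)^((k*(k-1):ℕ)) = (3:ℝ)^((k^2+1 : ℕ)) := by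
        rw [← pow_add]
        congr 1
        exact natD k (by omega)
      have hnatB := natB m hm1
      have hnatBR : ((k:ℝ)+1) * (45:ℝ)^m ≤ (3:ℝ)^((k^2+1:ℕ)) := by
        have h1 : ((m+2:ℕ):ℝ) * (45:ℝ)^m ≤ (3:ℝ)^(((m+1)^2+1 : ℕ)) := by exact_mod_cast hnatB
        have h2 : ((m+2:ℕ):ℝ) = (k:ℝ)+1 := by push_cast; linarith [hmcast]
        have h3 : (m+1)^2+1 = k^2+1 := by rw [hmk]
        rwa [h2, h3] at h1
      have h3k2 : (0:ℝ) < (3:ℝ)^((k^2+1:ℕ)) := by positivity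
      have h45 : (0:ℝ) < (45:ℝ)^m := by positivity
      have hk1pos : (0:ℝ) < (k:ℝ)+1 := by linarith
      have hfinal : 2 * (ρ:ℝ)^m < δ * (N:ℝ) := by
        have hTm3 : T^m ≤ (N:ℝ) / (3:ℝ)^((k^2+1:ℕ)) := by
          rw [← hpowmerge]
          exact hTm2
        have c2 : (45:ℝ)^m * T^m ≤ (45:ℝ)^m * ((N:ℝ) / (3:ℝ)^((k^2+1:ℕ))) :=
          mul_le_mul_of_nonneg_left hTm3 (le_of_lt h45)
        have c3 : (45:ℝ)^m * ((N:ℝ) / (3:ℝ)^((k^2+1:ℕ))) ≤ (N:ℝ) / ((k:ℝ)+1) := by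
          rw [← mul_div_assoc, div_le_div_iff₀ h3k2 hk1pos]
          calc (45:ℝ)^m * (N:ℝ) * ((k:ℝ)+1) = (((k:ℝ)+1) * (45:ℝ)^m) * (N:ℝ) := by ring
            _ ≤ (3:ℝ)^((k^2+1:ℕ)) * (N:ℝ) :=
                mul_le_mul_of_nonneg_right hnatBR (le_of_lt hNpos)
            _ = (N:ℝ) * (3:ℝ)^((k^2+1:ℕ)) := by ring
        have c4 : (N:ℝ) / ((k:ℝ)+1) * 2 < δ * (N:ℝ) := by
          rw [div_mul_eq_mul_div, div_lt_iff₀ hk1pos]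
          have := mul_lt_mul_of_pos_right hδlow hNpos
          calc (N:ℝ) * 2 = 2 * (N:ℝ) := by ring
            _ < δ * ((k:ℝ)+1) * (N:ℝ) := this
            _ = δ * (N:ℝ) * ((k:ℝ)+1) := by ring
        calc 2 * (ρ:ℝ)^m ≤ 2 * (45^m * T^m) := by linarith [hρpow]
          _ ≤ 2 * ((45:ℝ)^m * ((N:ℝ) / (3:ℝ)^((k^2+1:ℕ)))) := by linarith [c2]
          _ ≤ (N:ℝ) / ((k:ℝ)+1) * 2 := by linarith [c3]
          _ < δ * (N:ℝ) := c4
      linarith [hcard, hcardρ, hfinal]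
end

section
/- Let δ ∈ (0, 1/4) and set s = ⌈log₂(1/(4δ))⌉. Suppose N ≥ max{(2s)^s, 3^(73s)} is a positive integer and that A ⊆ [N] satisfies |A| ≥ δN. Then R_2(A − A) ≥ 3^(−8) · N^(1/(8s + 8)). -/
open scoped Classical Pointwise

lemma base_chain (A S : Finset ℤ) (u c b : ℤ) (M : ℕ)
    (hc : 1 ≤ c) (hM : 15 ≤ M)
    (hSsub : S ⊆ Finset.Ico u (u + (M:ℤ)))
    (hdense : 7 * M ≤ 10 * S.card)
    (hreal : ∀ z ∈ S, ∃ a ∈ A, z * c + b ≤ a ∧ a < z * c + b + 2 * c) :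
    ∃ B : Finset ℤ, B ⊆ A - A ∧ IsRegularSet 2 B ∧ M ≤ 60 * B.card := by
  set m := M / 60 with hm
  have h60m : 60 * m ≤ M := by
    have := Nat.div_mul_le_self M 60
    omega
  -- Step 1 : pigeonhole, for each j ≤ m there is z with z, z+20j ∈ S
  have key : ∀ j : ℕ, j ≤ m → ∃ z, z ∈ S ∧ z + 20*(j:ℤ) ∈ S := by
    intro j hj
    have h60j : 60 * j ≤ M := le_trans (by omega) h60m
    set t : ℤ := 20*(j:ℤ) with ht
    set T := S.image (fun z => z + t) with hT
    have hTcard : T.card = S.card := Finset.card_image_of_injective _ (add_left_injective t)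
    have hUnion : S ∪ T ⊆ Finset.Ico u (u + (M:ℤ) + t) := by
      intro w hw
      rcases Finset.mem_union.1 hw with hw | hw
      · have := hSsub hw
        rw [Finset.mem_Ico] at this ⊢
        constructor
        · exact this.1
        · have : w < u + M := this.2
          have htpos : (0:ℤ) ≤ t := by positivity
          omega
      · rw [Finset.mem_image] at hw
        obtain ⟨z, hz, rfl⟩ := hw
        have := hSsub hz
        rw [Finset.mem_Ico] at this ⊢
        have htpos : (0:ℤ) ≤ t := by positivity
        omega
    have hcardIco : (Finset.Ico u (u + (M:ℤ) + t)).card = M + 20*j := by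
      rw [Int.card_Ico]
      omega
    have hinter : (S ∩ T).Nonempty := by
      rw [← Finset.card_pos]
      have h1 := Finset.card_union_add_card_inter S T
      have h2 : (S ∪ T).card ≤ M + 20*j := by
        rw [← hcardIco]; exact Finset.card_le_card hUnion
      omega
    obtain ⟨w, hw⟩ := hinter
    have hwS : w ∈ S := (Finset.mem_inter.1 hw).1
    have hwT : w ∈ T := (Finset.mem_inter.1 hw).2
    rw [hT, Finset.mem_image] at hwT
    obtain ⟨z, hz, hzw⟩ := hwT
    exact ⟨z, hz, by rw [hzw]; exact hwS⟩
  -- Step 2 : realized differences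
  have keyd : ∀ j : ℕ, j ≤ m → ∃ dj : ℤ, dj ∈ A - A ∧
      20*(j:ℤ)*c - 2*c < dj ∧ dj < 20*(j:ℤ)*c + 2*c := by
    intro j hj
    obtain ⟨z, hz1, hz2⟩ := key j hj
    obtain ⟨a1, ha1A, ha1l, ha1u⟩ := hreal _ hz2
    obtain ⟨a2, ha2A, ha2l, ha2u⟩ := hreal _ hz1
    refine ⟨a1 - a2, Finset.sub_mem_sub ha1A ha2A, ?_, ?_⟩
    · have : (z + 20*(j:ℤ)) * c + b ≤ a1 := ha1l
      nlinarith [this, ha2u]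
    · nlinarith [ha1u, ha2l]
  set g : ℕ → ℤ := fun j => if h : j ≤ m then (keyd j h).choose else 0 with hg
  have hgmem : ∀ j (h : j ≤ m), g j ∈ A - A := by
    intro j h; rw [hg]; simp only [dif_pos h]; exact (keyd j h).choose_spec.1
  have hgl : ∀ j (h : j ≤ m), 20*(j:ℤ)*c - 2*c < g j := by
    intro j h; rw [hg]; simp only [dif_pos h]; exact (keyd j h).choose_spec.2.1
  have hgu : ∀ j (h : j ≤ m), g j < 20*(j:ℤ)*c + 2*c := by
    intro j h; rw [hg]; simp only [dif_pos h]; exact (keyd j h).choose_spec.2.2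
  have hmono : ∀ i j, i ≤ m → j ≤ m → i < j → g i < g j := by
    intro i j hi hj hij
    have h1 := hgu i hi
    have h2 := hgl j hj
    have hij' : (i:ℤ) + 1 ≤ (j:ℤ) := by exact_mod_cast hij
    nlinarith [h1, h2, hij', hc]
  set B := (Finset.range (m+1)).image g with hB
  have hBcard : B.card = m + 1 := by
    rw [hB, Finset.card_image_of_injOn, Finset.card_range]
    intro i hi j hj hij
    rw [Finset.mem_coe, Finset.mem_range] at hi hj
    by_contra hne
    rcases lt_or_gt_of_ne hne with h | h
    · exact absurd hij (ne_of_lt (hmono i j (by omega) (by omega) h))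
    · exact absurd hij.symm (ne_of_lt (hmono j i (by omega) (by omega) h))
  have hBsub : B ⊆ A - A := by
    intro x hx
    rw [hB, Finset.mem_image] at hx
    obtain ⟨j, hj, rfl⟩ := hx
    exact hgmem j (by rw [Finset.mem_range] at hj; omega)
  refine ⟨B, hBsub, ⟨16*(c:ℝ), by positivity, ?_⟩, by omega⟩
  rintro x y ⟨hx, hy, hxy, hsep⟩
  rw [hB, Finset.mem_image] at hx hy
  obtain ⟨i, hi, rfl⟩ := hx
  obtain ⟨j, hj, rfl⟩ := hy
  rw [Finset.mem_range] at hi hj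
  have hi' : i ≤ m := by omega
  have hj' : j ≤ m := by omega
  have hij : i < j := by
    by_contra h
    rcases Nat.lt_or_ge j i with h2 | h2
    · exact absurd hxy (not_lt.2 (le_of_lt (hmono j i hj' hi' h2)))
    · have : i = j := by omega
      subst this; exact lt_irrefl _ hxy
  have hji : j = i + 1 := by
    by_contra hne
    have h2 : i + 1 < j := by omega
    have hi1 : i + 1 ≤ m := by omega
    have he : g (i+1) ∈ B := by
      rw [hB, Finset.mem_image]; exact ⟨i+1, Finset.mem_range.2 (by omega), rfl⟩
    rcases hsep _ he with h3 | h3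
    · exact absurd h3 (not_le.2 (hmono i (i+1) hi' hi1 (by omega)))
    · exact absurd h3 (not_le.2 (hmono (i+1) j hi1 hj' h2))
  subst hji
  have h1 := hgu i hi'
  have h2 := hgl i hi'
  have h3 := hgu (i+1) (by omega)
  have h4 := hgl (i+1) (by omega)
  have hcast : ((i:ℕ)+1 : ℤ) = (i:ℤ) + 1 := by push_cast; ring
  have h3' : g (i+1) < 20*((i:ℤ)+1)*c + 2*c := by push_cast at h3; linarith
  have h4' : 20*((i:ℤ)+1)*c - 2*c < g (i+1) := by push_cast at h4; linarith
  have hlow : 16*c ≤ g (i+1) - g i := by nlinarith [h4', h1]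
  have hhigh : g (i+1) - g i ≤ 32*c := by nlinarith [h3', h2, hc]
  constructor
  · have : (16*c : ℤ) ≤ g (i+1) - g i := hlow
    calc (16*(c:ℝ)) = ((16*c : ℤ) : ℝ) := by push_cast; ring
    _ ≤ ((g (i+1) - g i : ℤ) : ℝ) := by exact_mod_cast this
    _ = _ := by push_cast; ring
  · have : (g (i+1) - g i : ℤ) ≤ 2 * (16*c) := by omega
    calc ((g (i+1) : ℝ)) - (g i : ℝ) = ((g (i+1) - g i : ℤ) : ℝ) := by push_cast; ring
    _ ≤ ((2*(16*c) : ℤ) : ℝ) := by exact_mod_cast this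
    _ = 2 * (16*(c:ℝ)) := by push_cast; ring

set_option maxHeartbeats 1000000 in
lemma rec_chain (A : Finset ℤ) (β : ℕ) (hβ : 18 ≤ β) :
    ∀ t : ℕ, ∀ (S : Finset ℤ) (u c b : ℤ) (M : ℕ) (η : ℝ),
    1 ≤ c → β^(t+2) ≤ M →
    0 < η → η ≤ 1 →
    (7/10 : ℝ) ≤ (6/5)^t * η →
    S ⊆ Finset.Ico u (u + (M:ℤ)) →
    η * M ≤ (S.card : ℝ) →
    (∀ z ∈ S, ∃ a ∈ A, z * c + b ≤ a ∧ a < z * c + b + 2 * c) →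
    ∃ B : Finset ℤ, B ⊆ A - A ∧ IsRegularSet 2 B ∧ β ≤ 120 * B.card := by
  have hbase : ∀ (S : Finset ℤ) (u c b : ℤ) (M : ℕ) (η : ℝ),
      1 ≤ c → β^2 ≤ M → (7/10 : ℝ) ≤ η →
      S ⊆ Finset.Ico u (u + (M:ℤ)) → η * M ≤ (S.card : ℝ) →
      (∀ z ∈ S, ∃ a ∈ A, z * c + b ≤ a ∧ a < z * c + b + 2 * c) →
      ∃ B : Finset ℤ, B ⊆ A - A ∧ IsRegularSet 2 B ∧ β ≤ 120 * B.card := by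
    intro S u c b M η hc hβM hη hSsub hScard hreal
    have hM2 : 324 ≤ M := le_trans (by nlinarith : 324 ≤ β^2) hβM
    have hdense : 7 * M ≤ 10 * S.card := by
      have h1 : (7/10 : ℝ) * M ≤ (S.card : ℝ) :=
        le_trans (by nlinarith [Nat.cast_nonneg (α := ℝ) M] : (7/10:ℝ)*M ≤ η*M) hScard
      have h2 : (7 * M : ℝ) ≤ 10 * S.card := by linarith
      exact_mod_cast h2
    obtain ⟨B, hB1, hB2, hB3⟩ := base_chain A S u c b M hc (by omega) hSsub hdense hreal
    refine ⟨B, hB1, hB2, ?_⟩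
    have : β ≤ M := le_trans (by nlinarith : β ≤ β^2) hβM
    omega
  intro t
  induction t with
  | zero =>
    intro S u c b M η hc hβM hη0 hη1 hηt hSsub hScard hreal
    refine hbase S u c b M η hc hβM ?_ hSsub hScard hreal
    simpa using hηt
  | succ t ih =>
    intro S u c b M η hc hβM hη0 hη1 hηt hSsub hScard hreal
    by_cases hbig : (7/10 : ℝ) ≤ η
    · exact hbase S u c b M η hc (le_trans (Nat.pow_le_pow_right (by omega) (by omega)) hβM)
        hbig hSsub hScard hreal
    · push_neg at hbig
      have hβpos : 0 < β := by omega
      obtain ⟨ℓ, hℓ⟩ : ∃ ℓ : ℕ, ℓ = M / β + 1 := ⟨_, rfl⟩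
      obtain ⟨K, hK⟩ : ∃ K : ℕ, K = M / ℓ + 1 := ⟨_, rfl⟩
      have hℓpos : 0 < ℓ := hℓ ▸ Nat.succ_pos _
      have hM2 : 324 ≤ M := by
        calc 324 ≤ β^2 := by nlinarith
        _ ≤ β^(t+1+2) := Nat.pow_le_pow_right (by omega) (by omega)
        _ ≤ M := hβM
      have hβM' : β ≤ M := by
        calc β ≤ β^2 := by nlinarith
        _ ≤ β^(t+1+2) := Nat.pow_le_pow_right (by omega) (by omega)
        _ ≤ M := hβM
      have hMℓ : 14 * ℓ ≤ M := by
        have h18 : M / β ≤ M / 18 := Nat.div_le_div_left hβ (by norm_num)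
        have h18b : 18 ≤ M / 18 := by
          have : 324 / 18 ≤ M / 18 := Nat.div_le_div_right hM2
          simpa using this
        have h18c : 18 * (M / 18) ≤ M := by
          have := Nat.div_mul_le_self M 18
          omega
        have h14 : 14 * (M/β) ≤ 14 * (M/18) := Nat.mul_le_mul_left 14 h18
        rw [hℓ]
        have : 14 * (M / β + 1) = 14*(M/β) + 14 := by ring
        rw [this]
        omega
      have hKℓ : K * ℓ ≤ M + ℓ := by
        calc K * ℓ = (M/ℓ)*ℓ + ℓ := by rw [hK]; ring
        _ ≤ M + ℓ := Nat.add_le_add_right (Nat.div_mul_le_self M ℓ) ℓ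
      have hKℓ2 : M < K * ℓ := by
        rw [hK]
        exact (Nat.div_lt_iff_lt_mul hℓpos).1 (Nat.lt_succ_self _)
      have hK15 : 15 ≤ K := by
        have h14 : 14 ≤ M / ℓ := (Nat.le_div_iff_mul_le hℓpos).2 hMℓ
        rw [hK]
        omega
      -- window index function
      set f : ℤ → ℕ := fun z => ((z - u).toNat) / ℓ with hf
      have hfmem : ∀ z ∈ S, f z ∈ Finset.range K := by
        intro z hz
        have hmem := hSsub hz
        rw [Finset.mem_Ico] at hmem
        rw [Finset.mem_range]
        show (z - u).toNat / ℓ < K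
        have h1 : (z - u).toNat ≤ M := by omega
        have h2 : (z-u).toNat / ℓ ≤ M / ℓ := Nat.div_le_div_right h1
        rw [hK]
        exact Nat.lt_succ_of_le h2
      have hwin : ∀ (i : ℕ) (z : ℤ), z ∈ S → f z = i →
          u + (i:ℤ)*(ℓ:ℤ) ≤ z ∧ z < u + (i:ℤ)*(ℓ:ℤ) + (ℓ:ℤ) := by
        intro i z hz hfz
        have hmem := hSsub hz
        rw [Finset.mem_Ico] at hmem
        have h0 : (0:ℤ) ≤ z - u := by omega
        have hdiv : (z - u).toNat / ℓ = i := hfz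
        have hez : (((z - u).toNat : ℕ) : ℤ) = z - u := Int.toNat_of_nonneg h0
        have h1 := Nat.div_add_mod ((z - u).toNat) ℓ
        rw [hdiv] at h1
        have h1' : i * ℓ + (z - u).toNat % ℓ = (z - u).toNat := by
          rw [mul_comm]; exact h1
        have h2 := Nat.mod_lt ((z - u).toNat) hℓpos
        have h3 : i*ℓ ≤ (z - u).toNat := Nat.le.intro h1'
        have h4 : (z - u).toNat < i*ℓ + ℓ := by
          rw [← h1']
          exact Nat.add_lt_add_left h2 _
        have h3' : ((i*ℓ : ℕ) : ℤ) ≤ z - u := by rw [← hez]; exact_mod_cast h3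
        have h4' : z - u < ((i*ℓ + ℓ : ℕ) : ℤ) := by rw [← hez]; exact_mod_cast h4
        push_cast at h3' h4'
        constructor <;> linarith
      by_cases hzoom : ∃ i ∈ Finset.range K,
          (6/5 : ℝ)*η*ℓ ≤ ((S.filter (fun z => f z = i)).card : ℝ)
      · obtain ⟨i, hiK, hcard⟩ := hzoom
        have hβℓ : β^(t+2) ≤ ℓ := by
          have hstep : β^(t+2) ≤ M / β := by
            rw [Nat.le_div_iff_mul_le hβpos]
            calc β^(t+2) * β = β^(t+1+2) := by ring
            _ ≤ M := hβM
          rw [hℓ]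
          exact le_trans hstep (Nat.le_succ _)
        refine ih (S.filter (fun z => f z = i)) (u + (i:ℤ)*(ℓ:ℤ)) c b ℓ ((6/5)*η) hc hβℓ
          (by positivity) (by linarith) ?_ ?_ ?_ ?_
        · calc (7/10 : ℝ) ≤ (6/5)^(t+1) * η := hηt
          _ = (6/5)^t * ((6/5)*η) := by ring
        · intro z hz
          rw [Finset.mem_filter] at hz
          obtain ⟨hw1, hw2⟩ := hwin i z hz.1 hz.2
          rw [Finset.mem_Ico]
          exact ⟨hw1, hw2⟩
        · calc (6/5*η) * (ℓ:ℝ) = (6/5)*η*ℓ := by ring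
          _ ≤ _ := hcard
        · intro z hz
          exact hreal z (Finset.filter_subset _ _ hz)
      · push_neg at hzoom
        set Z := (Finset.range K).filter
          (fun i => (η*ℓ/20 : ℝ) ≤ ((S.filter (fun z => f z = i)).card : ℝ)) with hZ
        have hsum : S.card = ∑ i ∈ Finset.range K, (S.filter (fun z => f z = i)).card :=
          Finset.card_eq_sum_card_fiberwise hfmem
        -- real mass bound
        have hmass : (S.card : ℝ) ≤ Z.card * ((6/5)*η*ℓ) + K * (η*ℓ/20) := by
          have hsplit := Finset.sum_filter_add_sum_filter_not (Finset.range K)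
            (fun i => (η*ℓ/20 : ℝ) ≤ ((S.filter (fun z => f z = i)).card : ℝ))
            (fun i => ((S.filter (fun z => f z = i)).card : ℝ))
          have h1 : ∑ i ∈ Z, ((S.filter (fun z => f z = i)).card : ℝ)
              ≤ Z.card * ((6/5)*η*ℓ) := by
            rw [← nsmul_eq_mul]
            refine Finset.sum_le_card_nsmul _ _ _ ?_
            intro i hi
            rw [hZ, Finset.mem_filter] at hi
            exact le_of_lt (hzoom i hi.1)
          have h2 : ∑ i ∈ (Finset.range K).filter
              (fun i => ¬ ((η*ℓ/20 : ℝ) ≤ ((S.filter (fun z => f z = i)).card : ℝ))),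
              ((S.filter (fun z => f z = i)).card : ℝ) ≤ K * (η*ℓ/20) := by
            have hb1 : ∑ i ∈ (Finset.range K).filter
                (fun i => ¬ ((η*ℓ/20 : ℝ) ≤ ((S.filter (fun z => f z = i)).card : ℝ))),
                ((S.filter (fun z => f z = i)).card : ℝ)
                ≤ ((Finset.range K).filter
                  (fun i => ¬ ((η*ℓ/20 : ℝ) ≤ ((S.filter (fun z => f z = i)).card : ℝ)))).card
                  • (η*ℓ/20 : ℝ) := by
              refine Finset.sum_le_card_nsmul _ _ _ ?_
              intro i hi
              rw [Finset.mem_filter] at hi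
              exact le_of_lt (not_le.1 hi.2)
            rw [nsmul_eq_mul] at hb1
            have hle : ((Finset.range K).filter
                (fun i => ¬ ((η*ℓ/20 : ℝ) ≤ ((S.filter (fun z => f z = i)).card : ℝ)))).card ≤ K := by
              calc _ ≤ (Finset.range K).card := Finset.card_filter_le _ _
              _ = K := Finset.card_range K
            have hpos : (0:ℝ) ≤ η*ℓ/20 := by positivity
            have hle' : (((Finset.range K).filter
                (fun i => ¬ ((η*ℓ/20 : ℝ) ≤ ((S.filter (fun z => f z = i)).card : ℝ)))).card : ℝ)
                ≤ (K : ℝ) := by exact_mod_cast hle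
            have := mul_le_mul_of_nonneg_right hle' hpos
            linarith
          have hcast : (S.card : ℝ) = ∑ i ∈ Finset.range K,
              ((S.filter (fun z => f z = i)).card : ℝ) := by
            rw [hsum]; push_cast; ring
          rw [hcast, ← hsplit]
          exact add_le_add h1 h2
        -- derive 7K ≤ 10 |Z|
        obtain ⟨Y, hY⟩ : ∃ Y : ℕ, Y = Z.card := ⟨_, rfl⟩
        rw [← hY] at hmass
        have hZK : 7 * K ≤ 10 * Y := by
          have hc1 : η * M ≤ Y * ((6/5)*η*ℓ) + K * (η*ℓ/20) := le_trans hScard hmass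
          have hfac : (Y:ℝ) * ((6/5)*η*ℓ) + K * (η*ℓ/20)
              = η * ((6/5)*Y*ℓ + K*ℓ/20) := by ring
          have hc1' : η * (M:ℝ) ≤ η * ((6/5)*Y*ℓ + K*ℓ/20) := by
            rw [← hfac]; exact hc1
          have hc1'' : (M:ℝ) ≤ (6/5)*Y*ℓ + K*ℓ/20 := (mul_le_mul_iff_right₀ hη0).1 hc1'
          have hc2 : (20 : ℝ) * M ≤ 24 * Y * ℓ + K * ℓ := by linarith
          have hc3 : (K : ℝ) * ℓ ≤ (M : ℝ) + ℓ := by exact_mod_cast hKℓ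
          have hc4 : (1:ℝ) ≤ ℓ := by exact_mod_cast hℓpos
          have h6 : 19 * (K:ℝ) * ℓ - 20 * ℓ ≤ 24 * Y * ℓ := by linarith
          have hc5 : 19 * (K:ℝ) - 20 ≤ 24 * Y := by
            by_contra hcon
            push_neg at hcon
            have hℓR : (0:ℝ) < ℓ := by linarith
            have := mul_lt_mul_of_pos_right hcon hℓR
            nlinarith [this, h6]
          have hc6 : 19 * K ≤ 24 * Y + 20 := by
            have h7 : ((19 * K : ℕ) : ℝ) ≤ ((24 * Y + 20 : ℕ) : ℝ) := by push_cast; linarith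
            exact_mod_cast h7
          omega
        clear hmass hsum hzoom hfmem
        -- apply base lemma at window-index level
        set Z' : Finset ℤ := Finset.image (fun i : ℕ => (i : ℤ)) Z with hZ'
        have hZ'card : Z'.card = Z.card :=
          Finset.card_image_of_injective _ (fun a b h => by exact_mod_cast h)
        have hZ'sub : Z' ⊆ Finset.Ico (0:ℤ) (0 + (K:ℤ)) := by
          intro x hx
          rw [hZ', Finset.mem_image] at hx
          obtain ⟨i, hi, rfl⟩ := hx
          rw [hZ, Finset.mem_filter, Finset.mem_range] at hi
          rw [Finset.mem_Ico]
          refine ⟨by positivity, ?_⟩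
          have : (i:ℤ) < (K:ℤ) := by exact_mod_cast hi.1
          omega
        have hZ'real : ∀ zi ∈ Z', ∃ a ∈ A,
            zi * (c*(ℓ:ℤ)) + (b + u*c) ≤ a ∧ a < zi * (c*(ℓ:ℤ)) + (b + u*c) + 2*(c*(ℓ:ℤ)) := by
          intro zi hzi
          rw [hZ', Finset.mem_image] at hzi
          obtain ⟨i, hi, rfl⟩ := hzi
          rw [hZ, Finset.mem_filter] at hi
          have hpos : (0:ℝ) < η*ℓ/20 := by positivity
          have hne : (S.filter (fun z => f z = i)).Nonempty := by
            rw [← Finset.card_pos]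
            have : (0:ℝ) < ((S.filter (fun z => f z = i)).card : ℝ) := lt_of_lt_of_le hpos hi.2
            exact_mod_cast this
          obtain ⟨z, hz⟩ := hne
          rw [Finset.mem_filter] at hz
          obtain ⟨a, haA, hal, hau⟩ := hreal z hz.1
          obtain ⟨hw1, hw2⟩ := hwin i z hz.1 hz.2
          have hcnn : (0:ℤ) ≤ c := by linarith
          have hcℓ : (1:ℤ) ≤ (ℓ:ℤ) := by exact_mod_cast hℓpos
          refine ⟨a, haA, ?_, ?_⟩
          · have hmul := mul_le_mul_of_nonneg_right hw1 hcnn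
            nlinarith [hmul, hal]
          · have h2' : z ≤ u + (i:ℤ)*(ℓ:ℤ) + (ℓ:ℤ) - 1 := by linarith [Int.lt_iff_add_one_le.1 hw2]
            have hmul := mul_le_mul_of_nonneg_right h2' hcnn
            nlinarith [hmul, hau, hc, hcℓ]
        have hdenseZ : 7 * K ≤ 10 * Z'.card := by
          rw [hZ'card, ← hY]
          exact hZK
        obtain ⟨B, hB1, hB2, hB3⟩ := base_chain A Z' 0 (c*(ℓ:ℤ)) (b + u*c) K
          (by nlinarith [hc, (by exact_mod_cast hℓpos : (1:ℤ) ≤ (ℓ:ℤ))])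
          (by omega) hZ'sub hdenseZ hZ'real
        refine ⟨B, hB1, hB2, ?_⟩
        have hβ2K : β ≤ 2 * K := by
          have h2 : β * (M/β) ≤ M := by
            rw [mul_comm]; exact Nat.div_mul_le_self M β
          have h1 : β * ℓ ≤ 2 * M := by
            calc β * ℓ = β*(M/β) + β := by rw [hℓ]; ring
            _ ≤ M + β := Nat.add_le_add_right h2 β
            _ ≤ 2*M := by omega
          have h3 : β * ℓ ≤ (2*K) * ℓ := by
            calc β * ℓ ≤ 2*M := h1
            _ ≤ 2*(K*ℓ) := Nat.mul_le_mul_left 2 (le_of_lt hKℓ2)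
            _ = (2*K)*ℓ := by ring
          exact Nat.le_of_mul_le_mul_right h3 hℓpos
        omega

lemma le_regMax (L : ℝ) (A B : Finset ℤ) (hBA : B ⊆ A) (hreg : IsRegularSet L B) :
    B.card ≤ regMax L A := by
  apply Finset.le_sup (f := Finset.card)
  simp only [Finset.mem_filter, Finset.mem_powerset]
  exact ⟨hBA, hreg⟩

lemma pow65 : ∀ k : ℕ, (7/10:ℝ) * 2^(k+1+2) ≤ (6/5)^(4*(k+1)+7) := by
  intro k
  induction k with
  | zero => norm_num
  | succ k ihk =>
    have h1 : (0:ℝ) < (6/5)^(4*(k+1)+7) := by positivity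
    have h2 : (2:ℝ) ≤ (6/5)^4 := by norm_num
    calc (7/10:ℝ)*2^(k+1+1+2) = ((7/10)*2^(k+1+2))*2 := by ring
    _ ≤ (6/5)^(4*(k+1)+7)*2 := by nlinarith [ihk]
    _ ≤ (6/5)^(4*(k+1)+7)*(6/5)^4 := by nlinarith [h1, h2]
    _ = (6/5)^(4*(k+1+1)+7) := by
        rw [← pow_add]
        have he : 4*(k+1)+7+4 = 4*(k+1+1)+7 := by omega
        rw [he]

/-- Let `δ ∈ (0, 1/4)` and `s = ⌈log₂(1/(4δ))⌉`. If `N ≥ max{(2s)^s, 3^(73s)}`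
and `A ⊆ {1, …, N}` has `|A| ≥ δN`, then `R_2(A − A) ≥ 3⁻⁸ · N^(1/(8s+8))`. -/
theorem stmt5 (δ : ℝ) (hδ0 : 0 < δ) (hδ1 : δ < 1 / 4)
    (s : ℕ) (hs : s = ⌈Real.logb 2 (1 / (4 * δ))⌉₊)
    (N : ℕ) (hN0 : 0 < N) (hN1 : (2 * s) ^ s ≤ N) (hN2 : 3 ^ (73 * s) ≤ N)
    (A : Finset ℤ) (hA : A ⊆ Finset.Icc (1 : ℤ) (N : ℤ))
    (hcard : δ * (N : ℝ) ≤ (A.card : ℝ)) :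
    (N : ℝ) ^ ((1 : ℝ) / (8 * s + 8)) / 3 ^ 8 ≤ (regMax 2 (A - A) : ℝ) := by
  have hs1 : 1 ≤ s := by
    rw [hs]
    have h1 : (1:ℝ) < 1/(4*δ) := by
      rw [lt_div_iff₀ (by linarith)]
      linarith
    have h2 : 0 < Real.logb 2 (1/(4*δ)) := Real.logb_pos (by norm_num) h1
    exact Nat.ceil_pos.mpr h2
  have hδ2 : (1:ℝ) ≤ δ * 2^(s+2) := by
    have hle : Real.logb 2 (1/(4*δ)) ≤ (s:ℝ) := by
      rw [hs]; exact Nat.le_ceil _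
    have hpos : (0:ℝ) < 1/(4*δ) := by positivity
    have h2 : (1/(4*δ)) ≤ (2:ℝ)^(s:ℝ) := by
      calc 1/(4*δ) = (2:ℝ) ^ Real.logb 2 (1/(4*δ)) :=
            (Real.rpow_logb (by norm_num) (by norm_num) hpos).symm
      _ ≤ (2:ℝ)^(s:ℝ) := Real.rpow_le_rpow_of_exponent_le (by norm_num) hle
    rw [Real.rpow_natCast] at h2
    have h3 := (div_le_iff₀ (by linarith : (0:ℝ) < 4*δ)).1 h2
    calc (1:ℝ) ≤ (2:ℝ)^(s:ℕ) * (4*δ) := h3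
    _ = δ * 2^(s+2) := by ring
  set D : ℕ := 4*s+9 with hD
  have hDpos : 0 < D := by omega
  have hN1R : (1:ℝ) ≤ (N:ℝ) := by exact_mod_cast hN0
  set β : ℕ := ⌊(N:ℝ)^((D:ℝ)⁻¹)⌋₊ with hβdef
  have h19 : (19:ℝ) ≤ (N:ℝ)^((D:ℝ)⁻¹) := by
    have hNlow : (19:ℕ)^D ≤ N := by
      calc (19:ℕ)^D ≤ 27^D := Nat.pow_le_pow_left (by norm_num) D
      _ = 3^(3*D) := by
          rw [pow_mul]
          norm_num
      _ ≤ 3^(73*s) := Nat.pow_le_pow_right (by norm_num) (by omega)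
      _ ≤ N := hN2
    have hNlow' : ((19:ℝ))^(D:ℕ) ≤ (N:ℝ) := by exact_mod_cast hNlow
    have h19' : (((19:ℝ))^(D:ℕ))^((D:ℝ)⁻¹) = 19 :=
      Real.pow_rpow_inv_natCast (by norm_num) (by omega)
    calc (19:ℝ) = (((19:ℝ))^(D:ℕ))^((D:ℝ)⁻¹) := h19'.symm
    _ ≤ (N:ℝ)^((D:ℝ)⁻¹) := Real.rpow_le_rpow (by positivity) hNlow' (by positivity)
  have hβ19 : 19 ≤ β := by
    rw [hβdef]
    exact Nat.le_floor (by exact_mod_cast h19)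
  have hβpow : β^D ≤ N := by
    have h1 : (β:ℝ) ≤ (N:ℝ)^((D:ℝ)⁻¹) := Nat.floor_le (by positivity)
    have h2 : ((β:ℝ))^(D:ℕ) ≤ ((N:ℝ)^((D:ℝ)⁻¹))^(D:ℕ) :=
      pow_le_pow_left₀ (by positivity) h1 D
    rw [Real.rpow_inv_natCast_pow (by positivity) (by omega)] at h2
    exact_mod_cast h2
  set T : ℕ := 4*s+7 with hT
  have hpow65T : (7/10:ℝ) ≤ (6/5)^T * δ := by
    obtain ⟨k, hk⟩ : ∃ k, s = k + 1 := ⟨s - 1, by omega⟩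
    have hkey := pow65 k
    rw [← hk] at hkey
    have hstep := mul_le_mul_of_nonneg_right hkey (le_of_lt hδ0)
    have h1 : (1:ℝ) * (7/10) ≤ (δ * 2^(s+2)) * (7/10) := by nlinarith [hδ2]
    calc (7/10:ℝ) = 1 * (7/10) := by ring
    _ ≤ (δ * 2^(s+2)) * (7/10) := h1
    _ = (7/10) * 2^(s+2) * δ := by ring
    _ ≤ (6/5)^(4*s+7) * δ := hstep
    _ = (6/5)^T * δ := by rw [hT]
  have hreal0 : ∀ z ∈ A, ∃ a ∈ A, z*1 + 0 ≤ a ∧ a < z*1 + 0 + 2*1 :=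
    fun z hz => ⟨z, hz, by omega, by omega⟩
  have hsub0 : A ⊆ Finset.Ico 1 (1 + (N:ℤ)) := by
    intro z hz
    have := hA hz
    rw [Finset.mem_Icc] at this
    rw [Finset.mem_Ico]
    omega
  obtain ⟨B, hB1, hB2, hB3⟩ := rec_chain A β (by omega) T A 1 1 0 N δ (le_refl 1)
    (by rw [hT]; have : 4*s+7+2 = D := by omega
        rw [this]; exact hβpow)
    hδ0 (by linarith) hpow65T hsub0 hcard hreal0
  have hBle : B.card ≤ regMax 2 (A - A) := le_regMax 2 (A - A) B hB1 hB2
  have hfloor : (N:ℝ)^((D:ℝ)⁻¹) < β + 1 := by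
    rw [hβdef]
    exact Nat.lt_floor_add_one _
  have hexp : (N:ℝ)^((1:ℝ)/(8*s+8)) ≤ (N:ℝ)^((D:ℝ)⁻¹) := by
    apply Real.rpow_le_rpow_of_exponent_le hN1R
    rw [one_div]
    apply inv_anti₀
    · positivity
    · push_cast
      have : (1:ℝ) ≤ (s:ℝ) := by exact_mod_cast hs1
      have hDR : (D:ℝ) = 4*s+9 := by rw [hD]; push_cast; ring
      linarith
  have hord : (N:ℝ)^((1:ℝ)/(8*s+8)) ≤ 2*β := by
    have hβ1R : (1:ℝ) ≤ (β:ℝ) := by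
      have : (1:ℕ) ≤ β := by omega
      exact_mod_cast this
    calc (N:ℝ)^((1:ℝ)/(8*s+8)) ≤ (N:ℝ)^((D:ℝ)⁻¹) := hexp
    _ ≤ (β:ℝ) + 1 := le_of_lt hfloor
    _ ≤ 2*β := by linarith
  have hfin : (2*(β:ℝ)) ≤ 6561 * B.card := by
    have h240 : (β:ℝ) ≤ 120 * B.card := by exact_mod_cast hB3
    have hBnn : (0:ℝ) ≤ (B.card:ℝ) := by positivity
    linarith
  have hreg : (B.card : ℝ) ≤ (regMax 2 (A - A) : ℝ) := by exact_mod_cast hBle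
  have h3e : ((3:ℝ)^8) = 6561 := by norm_num
  rw [div_le_iff₀ (by norm_num : (0:ℝ) < 3^8)]
  calc (N:ℝ)^((1:ℝ)/(8*s+8)) ≤ 2*β := hord
  _ ≤ 6561 * B.card := hfin
  _ ≤ 6561 * (regMax 2 (A - A) : ℝ) := by linarith
  _ = (regMax 2 (A - A) : ℝ) * 3^8 := by rw [h3e]; ring
end

section
/- Let A be a finite set of integers. Then C(A) ≥ ⌊R_2(A)^(1/2) / 4⌋. -/
open scoped Classical Pointwise

lemma consecIn_image {u : ℕ → ℤ} {s : ℕ} (hu : ∀ ⦃k l : ℕ⦄, k < l → l < s → u k < u l)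
    {a b : ℤ} (h : ConsecIn ((Finset.range s).image u) a b) :
    ∃ k, k + 1 < s ∧ a = u k ∧ b = u (k + 1) := by
  obtain ⟨ha, hb, hab, hmax⟩ := h
  simp only [Finset.mem_image, Finset.mem_range] at ha hb
  obtain ⟨k, hk, rfl⟩ := ha
  obtain ⟨l, hl, rfl⟩ := hb
  have hkl : k < l := by
    by_contra hcon
    push_neg at hcon
    rcases eq_or_lt_of_le hcon with h | h
    · subst h; exact lt_irrefl _ hab
    · exact absurd hab (not_lt.2 (hu h hk).le)
  have hl1 : l = k + 1 := by
    by_contra hne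
    have hkl1 : k + 1 < l := by omega
    have hc := hmax (u (k + 1))
      (Finset.mem_image_of_mem u (Finset.mem_range.2 (by omega)))
    rcases hc with hc | hc
    · exact absurd hc (not_le.2 (hu (Nat.lt_succ_self k) (by omega)))
    · exact absurd hc (not_le.2 (hu hkl1 hl))
  exact ⟨k, by omega, rfl, by rw [hl1]⟩

lemma consecIn_orderIsoOfFin (B : Finset ℤ) {n : ℕ} (h : B.card = n) {i : ℕ} (hi : i + 1 < n) :
    ConsecIn B (B.orderIsoOfFin h ⟨i, by omega⟩) (B.orderIsoOfFin h ⟨i + 1, hi⟩) := by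
  set f := B.orderIsoOfFin h with hf
  set fi : Fin n := ⟨i, by omega⟩ with hfi
  set fi1 : Fin n := ⟨i + 1, hi⟩ with hfi1
  have hlt : fi < fi1 := by rw [Fin.lt_def, hfi, hfi1]; simp
  refine ⟨(f fi).2, (f fi1).2, ?_, ?_⟩
  · exact_mod_cast f.strictMono hlt
  · intro c hc
    obtain ⟨j, hj⟩ : ∃ j, (f j : ℤ) = c := ⟨f.symm ⟨c, hc⟩, by simp⟩
    rcases le_or_gt (j : ℕ) i with hji | hji
    · left; rw [← hj]
      exact_mod_cast f.monotone (show j ≤ fi from by rw [Fin.le_def, hfi]; exact hji)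
    · right; rw [← hj]
      exact_mod_cast f.monotone (show fi1 ≤ j from by rw [Fin.le_def, hfi1]; exact hji)

/-- For a finite set `A` of integers, `C(A) ≥ ⌊R_2(A)^(1/2) / 4⌋`. -/
theorem stmt6 (A : Finset ℤ) :
    ⌊Real.sqrt (regMax 2 A : ℝ) / 4⌋₊ ≤ convMax A := by
  set s := ⌊Real.sqrt (regMax 2 A : ℝ) / 4⌋₊ with hs
  rcases Nat.eq_zero_or_pos s with h0 | hspos
  · rw [h0]; exact Nat.zero_le _
  have hne : (A.powerset.filter fun B => IsRegularSet 2 B).Nonempty := by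
    refine ⟨∅, Finset.mem_filter.2 ⟨Finset.mem_powerset.2 (Finset.empty_subset A),
      ⟨1, one_pos, ?_⟩⟩⟩
    intro a b hab
    exact absurd hab.1 (Finset.notMem_empty a)
  obtain ⟨B, hBmem, hBcard⟩ := Finset.exists_mem_eq_sup _ hne Finset.card
  rw [Finset.mem_filter, Finset.mem_powerset] at hBmem
  obtain ⟨hBA, X, hX, hreg⟩ := hBmem
  set n := B.card with hn
  have hrn : regMax 2 A = n := hBcard
  have hs1 : (1 : ℝ) ≤ (s : ℝ) := by exact_mod_cast hspos
  have hsn : (16 : ℝ) * (s : ℝ) ^ 2 ≤ (n : ℝ) := by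
    have h1 : (s : ℝ) ≤ Real.sqrt (n : ℝ) / 4 := by
      rw [hs, hrn]; exact Nat.floor_le (by positivity)
    have h2 : Real.sqrt (n : ℝ) * Real.sqrt (n : ℝ) = (n : ℝ) :=
      Real.mul_self_sqrt (by positivity)
    nlinarith [Real.sqrt_nonneg (n : ℝ)]
  have hn0 : 16 ≤ (n : ℝ) := by nlinarith
  have hn1 : 1 ≤ n := by
    have h16 : (1 : ℝ) ≤ (n : ℝ) := by linarith
    exact_mod_cast h16
  set f := B.orderIsoOfFin hn.symm with hfdef
  set u' : ℕ → ℤ := fun i => if hi : i < n then (f ⟨i, hi⟩ : ℤ) else 0 with hu'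
  have hcons : ∀ i : ℕ, i + 1 < n → ConsecIn B (u' i) (u' (i + 1)) := by
    intro i hi
    have h := consecIn_orderIsoOfFin B hn.symm hi
    have e1 : u' i = (f ⟨i, by omega⟩ : ℤ) := by rw [hu']; exact dif_pos (by omega)
    have e2 : u' (i + 1) = (f ⟨i + 1, hi⟩ : ℤ) := by rw [hu']; exact dif_pos hi
    rw [e1, e2]; exact h
  have hstep : ∀ i : ℕ, i + 1 < n →
      X ≤ (u' (i + 1) : ℝ) - (u' i : ℝ) ∧ (u' (i + 1) : ℝ) - (u' i : ℝ) ≤ 2 * X := by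
    intro i hi
    have := hreg _ _ (hcons i hi)
    constructor
    · exact this.1
    · linarith [this.2]
  have hmono1 : ∀ i : ℕ, i + 1 < n → u' i < u' (i + 1) := by
    intro i hi
    have h1 := (hstep i hi).1
    have : (u' i : ℝ) < (u' (i + 1) : ℝ) := by linarith
    exact_mod_cast this
  have hmono : ∀ i k : ℕ, i < k → k < n → u' i < u' k := by
    intro i k
    induction k with
    | zero => omega
    | succ m ih =>
      intro hik hk
      rcases Nat.lt_or_ge i m with h | h
      · exact lt_trans (ih h (by omega)) (hmono1 m hk)
      · have : i = m := by omega
        subst this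
        exact hmono1 i hk
  have hlow : ∀ i : ℕ, i < n → (i : ℝ) * X ≤ (u' i : ℝ) - (u' 0 : ℝ) := by
    intro i
    induction i with
    | zero => intro _; simp
    | succ m ih =>
      intro hi
      have h1 := ih (by omega)
      have h2 := (hstep m hi).1
      push_cast
      linarith
  have hex : ∀ k : ℕ, ∃ i : ℕ, i = n ∨ (3 * (k : ℝ) ^ 2 - 1) * X < (u' i : ℝ) - (u' 0 : ℝ) :=
    fun k => ⟨n, Or.inl rfl⟩
  set j : ℕ → ℕ := fun k => Nat.find (hex k) with hjdef
  have hjeq : ∀ k : ℕ, j k = Nat.find (hex k) := fun k => rfl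
  have hjlt : ∀ k : ℕ, k < s → j k < n := by
    intro k hk
    have hle : Nat.find (hex k) ≤ n - 1 := by
      apply Nat.find_le
      right
      have hl := hlow (n - 1) (by omega)
      have hcast : ((n - 1 : ℕ) : ℝ) = (n : ℝ) - 1 := by
        push_cast [Nat.cast_sub hn1]; ring
      rw [hcast] at hl
      have hks : (k : ℝ) + 1 ≤ (s : ℝ) := by exact_mod_cast hk
      have hnk : (3 * (k : ℝ) ^ 2 - 1) < (n : ℝ) - 1 := by nlinarith
      calc (3 * (k : ℝ) ^ 2 - 1) * X < ((n : ℝ) - 1) * X :=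
            mul_lt_mul_of_pos_right hnk hX
        _ ≤ (u' (n - 1) : ℝ) - (u' 0 : ℝ) := hl
    have he := hjeq k
    omega
  have hjB : ∀ k : ℕ, k < s → (3 * (k : ℝ) ^ 2 - 1) * X < (u' (j k) : ℝ) - (u' 0 : ℝ) := by
    intro k hk
    rw [hjeq k]
    rcases Nat.find_spec (hex k) with h | h
    · exact absurd h (by have h2 := hjlt k hk; have h3 := hjeq k; omega)
    · exact h
  have hjU : ∀ k : ℕ, k < s → (u' (j k) : ℝ) - (u' 0 : ℝ) ≤ (3 * (k : ℝ) ^ 2 + 1) * X := by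
    intro k hk
    rw [hjeq k]
    have hlt' : Nat.find (hex k) < n := by have := hjlt k hk; have := hjeq k; omega
    rcases Nat.eq_zero_or_pos (Nat.find (hex k)) with h0 | hpos
    · rw [h0, sub_self]
      positivity
    · have hmin := Nat.find_min (hex k) (show Nat.find (hex k) - 1 < Nat.find (hex k) by omega)
      push_neg at hmin
      obtain ⟨-, h2⟩ := hmin
      have he : Nat.find (hex k) - 1 + 1 = Nat.find (hex k) := by omega
      have hstep' := hstep (Nat.find (hex k) - 1) (by rw [he]; exact hlt')
      rw [he] at hstep'
      linarith [hstep'.2]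
  have hjm : ∀ k l : ℕ, k < l → l < s → j k < j l := by
    intro k l hkl hl
    have hk : k < s := by omega
    have h1 := hjU k hk
    have h2 := hjB l hl
    have hkl' : (k : ℝ) + 1 ≤ (l : ℝ) := by exact_mod_cast hkl
    have hk0 : (0 : ℝ) ≤ (k : ℝ) := Nat.cast_nonneg k
    have key : (3 * (k : ℝ) ^ 2 + 1) * X < (3 * (l : ℝ) ^ 2 - 1) * X := by
      apply mul_lt_mul_of_pos_right _ hX
      nlinarith
    have hulul : (u' (j k) : ℝ) < (u' (j l) : ℝ) := by linarith
    by_contra hcon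
    push_neg at hcon
    rcases eq_or_lt_of_le hcon with he | hlt
    · rw [he] at hulul; exact lt_irrefl _ hulul
    · have h3 := hmono _ _ hlt (hjlt k hk)
      have h4 : (u' (j l) : ℝ) < (u' (j k) : ℝ) := by exact_mod_cast h3
      linarith
  set u : ℕ → ℤ := fun k => u' (j k) with hudef
  have huu : ∀ ⦃k l : ℕ⦄, k < l → l < s → u k < u l :=
    fun k l hkl hl => hmono _ _ (hjm k l hkl hl) (hjlt l hl)
  set B' : Finset ℤ := (Finset.range s).image u with hB'
  have hBsub : B' ⊆ A := by
    intro x hx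
    rw [hB', Finset.mem_image] at hx
    obtain ⟨k, hk, rfl⟩ := hx
    rw [Finset.mem_range] at hk
    apply hBA
    have hlt := hjlt k hk
    have e : u k = (f ⟨j k, hlt⟩ : ℤ) := by rw [hudef]; exact dif_pos hlt
    rw [e]
    exact (f ⟨j k, hlt⟩).2
  have hcard : B'.card = s := by
    rw [hB', Finset.card_image_of_injOn, Finset.card_range]
    intro a ha b hb hab
    rw [Finset.coe_range, Set.mem_Iio] at ha hb
    rcases lt_trichotomy a b with h | h | h
    · exact absurd hab (ne_of_lt (huu h hb))
    · exact h
    · exact absurd hab.symm (ne_of_lt (huu h ha))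
  have hgap : ∀ k : ℕ, k + 2 < s → u (k + 1) - u k < u (k + 2) - u (k + 1) := by
    intro k hk
    have b0 := hjB k (by omega)
    have u1 := hjU (k + 1) (by omega)
    have b2 := hjB (k + 2) (by omega)
    have u0 := hjU k (by omega)
    have b1 := hjB (k + 1) (by omega)
    have hr : ((u (k + 1) : ℤ) : ℝ) - ((u k : ℤ) : ℝ) <
        ((u (k + 2) : ℤ) : ℝ) - ((u (k + 1) : ℤ) : ℝ) := by
      rw [hudef]
      push_cast at b0 u1 b2 u0 b1 ⊢
      nlinarith
    exact_mod_cast hr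
  have hconv : IsConvexSet B' := by
    intro a b c h1 h2
    rw [hB'] at h1 h2
    obtain ⟨k, hk, rfl, rfl⟩ := consecIn_image huu h1
    obtain ⟨k', hk', he, rfl⟩ := consecIn_image huu h2
    have hkk : k' = k + 1 := by
      rcases lt_trichotomy k' (k + 1) with h | h | h
      · exact absurd he.symm (ne_of_lt (huu h hk))
      · exact h
      · exact absurd he (ne_of_lt (huu h (by omega)))
    subst hkk
    have hg := hgap k (by omega)
    simpa [show k + 1 + 1 = k + 2 from rfl] using hg
  calc s = B'.card := hcard.symm
    _ ≤ convMax A := Finset.le_sup (Finset.mem_filter.2 ⟨Finset.mem_powerset.2 hBsub, hconv⟩)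
end

section
/- Let B be a finite set of integers that is 2-regular. Then B contains a strictly convex subset of cardinality at least ⌊|B|^(1/2) / 4⌋. -/
open scoped Classical Pointwise

/-- A `2`-regular finite set `B` of integers contains a strictly convex subset of
cardinality at least `⌊|B|^(1/2) / 4⌋`. -/
theorem stmt7 (B : Finset ℤ) (hB : IsRegularSet 2 B) :
    ∃ B' ⊆ B, IsConvexSet B' ∧ ⌊Real.sqrt (B.card : ℝ) / 4⌋₊ ≤ B'.card := by
  classical
  obtain ⟨X, hX, hgap⟩ := hB
  set n := B.card with hn
  set k := ⌊Real.sqrt (n : ℝ) / 4⌋₊ with hk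
  rcases Nat.eq_zero_or_pos k with hk0 | hkpos
  · refine ⟨∅, Finset.empty_subset _, ?_, ?_⟩
    · intro a b c h1 _
      exact absurd h1.1 (by simp)
    · simp [← hk, hk0]
  -- basic counting: `16 k² ≤ n` and hence `2 k² + 1 ≤ n`
  have hk16 : 16 * k ^ 2 ≤ n := by
    have h1 : (k : ℝ) ≤ Real.sqrt (n : ℝ) / 4 := Nat.floor_le (by positivity)
    have h2 : (4 * (k : ℝ)) ^ 2 ≤ (Real.sqrt (n : ℝ)) ^ 2 := by
      apply pow_le_pow_left₀ (by positivity)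
      linarith
    rw [Real.sq_sqrt (by positivity)] at h2
    have : (16 * k ^ 2 : ℝ) ≤ (n : ℝ) := by nlinarith
    exact_mod_cast this
  have hksq : 1 ≤ k ^ 2 := Nat.one_le_pow _ _ hkpos
  have h2k : 2 * k ^ 2 + 1 ≤ n := by nlinarith
  have hnpos : 0 < n := by omega
  -- the increasing enumeration of B
  set e := B.orderEmbOfFin hn.symm with he
  have heB : ∀ i : Fin n, e i ∈ B := fun i => B.orderEmbOfFin_mem hn.symm i
  have hsurj : ∀ c ∈ B, ∃ m : Fin n, e m = c := by
    intro c hc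
    have : c ∈ Set.range e := by
      rw [he, Finset.range_orderEmbOfFin]; exact_mod_cast hc
    exact this
  set a0 : ℤ := e ⟨0, hnpos⟩ with ha0
  have ha0B : a0 ∈ B := heB _
  have ha0le : ∀ b ∈ B, a0 ≤ b := by
    intro b hb
    obtain ⟨m, hm⟩ := hsurj b hb
    rw [← hm]
    exact e.monotone (by simp [Fin.le_def])
  -- consecutive elements of the enumeration are consecutive in B
  have hconsec : ∀ (i : ℕ) (h : i + 1 < n),
      ConsecIn B (e ⟨i, by omega⟩) (e ⟨i + 1, h⟩) := by
    intro i h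
    refine ⟨heB _, heB _, e.strictMono (by simp [Fin.lt_def]), ?_⟩
    intro c hc
    obtain ⟨m, hm⟩ := hsurj c hc
    rcases le_or_gt (m : ℕ) i with h' | h'
    · left; rw [← hm]; exact e.monotone (by simp [Fin.le_def, h'])
    · right; rw [← hm]; exact e.monotone (by simp [Fin.le_def]; omega)
  -- telescoping lower bound
  have htel : ∀ (i : ℕ) (h : i < n), (a0 : ℝ) + i * X ≤ ((e ⟨i, h⟩ : ℤ) : ℝ) := by
    intro i
    induction i with
    | zero => intro h; simp [ha0]
    | succ i ih =>
      intro h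
      have h1 := ih (by omega)
      have h2 := (hgap _ _ (hconsec i h)).1
      push_cast
      push_cast at h1
      linarith
  -- the thresholds and selected elements
  set F : ℕ → Finset ℤ := fun j => B.filter (fun b => (a0 : ℝ) + 2 * X * j ^ 2 ≤ (b : ℝ)) with hF
  have hFne : ∀ j ≤ k, (F j).Nonempty := by
    intro j hj
    refine ⟨e ⟨n - 1, by omega⟩, ?_⟩
    rw [hF, Finset.mem_filter]
    refine ⟨heB _, ?_⟩
    have h1 := htel (n - 1) (by omega)
    have h2 : (2 * X * (j : ℝ) ^ 2) ≤ ((n : ℝ) - 1) * X := by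
      have hj' : (j : ℝ) ≤ (k : ℝ) := by exact_mod_cast hj
      have hn' : (2 * (k : ℝ) ^ 2 + 1) ≤ (n : ℝ) := by exact_mod_cast h2k
      have hjsq : (j : ℝ) ^ 2 ≤ (k : ℝ) ^ 2 := pow_le_pow_left₀ (by positivity) hj' 2
      nlinarith [hX.le, mul_le_mul_of_nonneg_left hjsq hX.le, mul_le_mul_of_nonneg_right hn' hX.le]
    rw [Nat.cast_sub (by omega : 1 ≤ n)] at h1
    push_cast at h1
    linarith
  set v : ℕ → ℤ := fun j => if h : (F j).Nonempty then (F j).min' h else 0 with hv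
  have hvdef : ∀ j (hj : j ≤ k), v j = (F j).min' (hFne j hj) := by
    intro j hj; simp only [hv]; rw [dif_pos (hFne j hj)]
  have hvB : ∀ j ≤ k, v j ∈ B := by
    intro j hj
    rw [hvdef j hj]
    have hm : (F j).min' (hFne j hj) ∈ B ∧ (a0 : ℝ) + 2 * X * j ^ 2 ≤ (((F j).min' (hFne j hj) : ℤ) : ℝ) :=
      Finset.mem_filter.mp ((F j).min'_mem (hFne j hj))
    exact hm.1
  have hvlb : ∀ j ≤ k, (a0 : ℝ) + 2 * X * j ^ 2 ≤ ((v j : ℤ) : ℝ) := by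
    intro j hj
    rw [hvdef j hj]
    have hm : (F j).min' (hFne j hj) ∈ B ∧ (a0 : ℝ) + 2 * X * j ^ 2 ≤ (((F j).min' (hFne j hj) : ℤ) : ℝ) :=
      Finset.mem_filter.mp ((F j).min'_mem (hFne j hj))
    exact hm.2
  have hvmin : ∀ j ≤ k, ∀ b ∈ B, (a0 : ℝ) + 2 * X * j ^ 2 ≤ (b : ℝ) → v j ≤ b := by
    intro j hj b hb hble
    rw [hvdef j hj]
    exact (F j).min'_le b (by rw [hF, Finset.mem_filter]; exact ⟨hb, hble⟩)
  -- upper bound on selected elements, for 1 ≤ j ≤ k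
  have hvub : ∀ j, 1 ≤ j → j ≤ k → ((v j : ℤ) : ℝ) < (a0 : ℝ) + 2 * X * j ^ 2 + 2 * X := by
    intro j hj1 hjk
    have hjsq : (1 : ℝ) ≤ (j : ℝ) ^ 2 := by
      have : (1 : ℝ) ≤ (j : ℝ) := by exact_mod_cast hj1
      nlinarith
    have ha0lt : a0 < v j := by
      have h1 := hvlb j hjk
      have : (a0 : ℝ) < ((v j : ℤ) : ℝ) := by nlinarith
      exact_mod_cast this
    set P := B.filter (fun b => b < v j) with hP
    have hPne : P.Nonempty := ⟨a0, by rw [hP, Finset.mem_filter]; exact ⟨ha0B, ha0lt⟩⟩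
    set p := P.max' hPne with hp
    have hpP : p ∈ B ∧ p < v j := Finset.mem_filter.mp (P.max'_mem hPne)
    have hcons : ConsecIn B p (v j) := by
      refine ⟨hpP.1, hvB j hjk, hpP.2, ?_⟩
      intro c hc
      rcases lt_or_ge c (v j) with h' | h'
      · left; exact P.le_max' c (by rw [hP, Finset.mem_filter]; exact ⟨hc, h'⟩)
      · right; exact h'
    have hgap2 := (hgap _ _ hcons).2
    have hpnotF : (p : ℝ) < (a0 : ℝ) + 2 * X * j ^ 2 := by
      by_contra hcon
      push_neg at hcon
      exact absurd (hvmin j hjk p hpP.1 hcon) (not_le.mpr hpP.2)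
    linarith
  -- strict monotonicity for 1 ≤ i < j ≤ k
  have hvmono : ∀ i j, 1 ≤ i → i < j → j ≤ k → v i < v j := by
    intro i j hi1 hij hjk
    have h1 := hvub i hi1 (by omega)
    have h2 := hvlb j hjk
    have hij' : (i : ℝ) + 1 ≤ (j : ℝ) := by exact_mod_cast hij
    have hsq : (i : ℝ) ^ 2 + 1 ≤ (j : ℝ) ^ 2 := by nlinarith [Nat.cast_nonneg (α := ℝ) i]
    have : ((v i : ℤ) : ℝ) < ((v j : ℤ) : ℝ) := by nlinarith
    exact_mod_cast this
  -- the convex set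
  set B' := (Finset.Icc 1 k).image v with hB'
  have hmemB' : ∀ j, 1 ≤ j → j ≤ k → v j ∈ B' := by
    intro j h1 h2
    rw [hB']
    exact Finset.mem_image_of_mem v (Finset.mem_Icc.mpr ⟨h1, h2⟩)
  have hidx : ∀ a ∈ B', ∃ j, 1 ≤ j ∧ j ≤ k ∧ v j = a := by
    intro a ha
    rw [hB', Finset.mem_image] at ha
    obtain ⟨j, hj, hja⟩ := ha
    rw [Finset.mem_Icc] at hj
    exact ⟨j, hj.1, hj.2, hja⟩
  have hsub : B' ⊆ B := by
    intro a ha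
    obtain ⟨j, h1, h2, h3⟩ := hidx a ha
    rw [← h3]; exact hvB j h2
  have hinj : ∀ i j, 1 ≤ i → i ≤ k → 1 ≤ j → j ≤ k → v i = v j → i = j := by
    intro i j hi1 hik hj1 hjk hvij
    by_contra hne
    rcases Nat.lt_or_ge i j with h | h
    · exact absurd hvij (ne_of_lt (hvmono i j hi1 h hjk))
    · have : i ≠ j := hne
      have h' : j < i := by omega
      exact absurd hvij.symm (ne_of_lt (hvmono j i hj1 h' hik))
  have hcard : B'.card = k := by
    rw [hB', Finset.card_image_of_injOn, Nat.card_Icc]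
    · omega
    · intro i hi j hj hvij
      simp only [Finset.coe_Icc, Set.mem_Icc] at hi hj
      exact hinj i j hi.1 hi.2 hj.1 hj.2 hvij
  -- consecutive elements of B' have consecutive indices
  have hstep : ∀ i j, 1 ≤ i → i ≤ k → 1 ≤ j → j ≤ k →
      ConsecIn B' (v i) (v j) → j = i + 1 := by
    intro i j hi1 hik hj1 hjk hcons
    have hlt : v i < v j := hcons.2.2.1
    have hij : i < j := by
      by_contra hcon
      push_neg at hcon
      rcases Nat.lt_or_ge j i with h | h
      · exact absurd hlt (not_lt.mpr (le_of_lt (hvmono j i hj1 h hik)))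
      · have : i = j := by omega
        rw [this] at hlt; exact absurd hlt (lt_irrefl _)
    by_contra hne
    have hi1j : i + 1 < j := by omega
    have hmid : v (i + 1) ∈ B' := hmemB' (i + 1) (by omega) (by omega)
    rcases hcons.2.2.2 _ hmid with h' | h'
    · exact absurd h' (not_le.mpr (hvmono i (i + 1) hi1 (by omega) (by omega)))
    · exact absurd h' (not_le.mpr (hvmono (i + 1) j (by omega) hi1j hjk))
  -- convexity
  have hconv : IsConvexSet B' := by
    intro a b c h1 h2
    obtain ⟨i, hi1, hik, hia⟩ := hidx a h1.1
    obtain ⟨j, hj1, hjk, hjb⟩ := hidx b h1.2.1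
    obtain ⟨j', hj'1, hj'k, hj'b⟩ := hidx b h2.1
    obtain ⟨m, hm1, hmk, hmc⟩ := hidx c h2.2.1
    rw [← hia, ← hjb] at h1
    rw [← hj'b, ← hmc] at h2
    have hji : j = i + 1 := hstep i j hi1 hik hj1 hjk h1
    have hjj' : j' = j := hinj j' j hj'1 hj'k hj1 hjk (by rw [hj'b, hjb])
    have hmj : m = j' + 1 := hstep j' m hj'1 hj'k hm1 hmk h2
    have hmval : m = i + 2 := by omega
    -- numeric bounds
    have hl1 : ((v (i + 1) : ℤ) : ℝ) < (a0 : ℝ) + 2 * X * ((i : ℝ) + 1) ^ 2 + 2 * X := by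
      have := hvub (i + 1) (by omega) (by omega)
      push_cast at this ⊢
      linarith
    have hl2 : (a0 : ℝ) + 2 * X * (i : ℝ) ^ 2 ≤ ((v i : ℤ) : ℝ) := by
      have := hvlb i hik
      push_cast at this ⊢
      linarith
    have hl3 : (a0 : ℝ) + 2 * X * ((i : ℝ) + 2) ^ 2 ≤ ((v (i + 2) : ℤ) : ℝ) := by
      have := hvlb (i + 2) (by omega)
      push_cast at this ⊢
      linarith
    have key : ((v (i + 1) : ℤ) : ℝ) - ((v i : ℤ) : ℝ)
        < ((v (i + 2) : ℤ) : ℝ) - ((v (i + 1) : ℤ) : ℝ) := by nlinarith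
    rw [← hia, ← hjb, ← hmc, hji, hmval]
    have : ((v (i + 1) - v i : ℤ) : ℝ) < ((v (i + 2) - v (i + 1) : ℤ) : ℝ) := by
      push_cast; linarith
    exact_mod_cast this
  exact ⟨B', hsub, hconv, by rw [hcard]⟩
end

section
/- Let r and N be positive integers with N ≥ 3^(r² + r). Then for any partition [N] = A_1 ∪ ⋯ ∪ A_r of [N] into r parts, max{C(A_i) : 1 ≤ i ≤ r} ≥ ⌊N^(1/(2r)) / (4 · 3^(r/2))⌋. -/
open scoped Classical Pointwise

/-- Picking one point out of each of the blocks numbered `0, 1, 4, …, u², …`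
(blocks of length `M`) yields a strictly convex set. -/
lemma blocks_convex (M a : ℤ) (hM : 1 ≤ M) (n : ℕ) (g : ℕ → ℤ)
    (hg : ∀ u : ℕ, u < n →
      a + (u : ℤ) ^ 2 * M + 1 ≤ g u ∧ g u ≤ a + ((u : ℤ) ^ 2 + 1) * M) :
    IsConvexSet ((Finset.range n).image g) ∧ ((Finset.range n).image g).card = n := by
  have mono : ∀ u v : ℕ, u < v → v < n → g u < g v := by
    intro u v huv hv
    have h1 := (hg u (lt_trans huv hv)).2
    have h2 := (hg v hv).1
    have hcast : (u : ℤ) + 1 ≤ (v : ℤ) := by exact_mod_cast huv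
    have h5 : (u : ℤ) ^ 2 + 1 ≤ (v : ℤ) ^ 2 := by nlinarith [Int.natCast_nonneg u]
    have h6 : ((u : ℤ) ^ 2 + 1) * M ≤ (v : ℤ) ^ 2 * M :=
      mul_le_mul_of_nonneg_right h5 (by linarith)
    linarith
  have hinj : Set.InjOn g (Finset.range n) := by
    intro u hu v hv huv
    by_contra hne
    rcases lt_or_gt_of_ne hne with h | h
    · exact absurd huv (ne_of_lt (mono u v h (Finset.mem_range.mp hv)))
    · exact absurd huv.symm (ne_of_lt (mono v u h (Finset.mem_range.mp hu)))
  have consec : ∀ p q : ℤ, ConsecIn ((Finset.range n).image g) p q →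
      ∃ u : ℕ, u + 2 ≤ n ∧ p = g u ∧ q = g (u + 1) := by
    intro p q hpq'
    obtain ⟨hp, hq, hpq, hmid⟩ := hpq'
    obtain ⟨u, hu, hgu⟩ := Finset.mem_image.mp hp
    obtain ⟨v, hv, hgv⟩ := Finset.mem_image.mp hq
    rw [Finset.mem_range] at hu hv
    have huv : u < v := by
      by_contra h
      push_neg at h
      rcases lt_or_eq_of_le h with h' | h'
      · have := mono v u h' hu
        rw [hgu, hgv] at this
        exact absurd hpq (not_lt.mpr (le_of_lt this))
      · rw [← hgu, ← hgv, h'] at hpq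
        exact lt_irrefl _ hpq
    have hveq : v = u + 1 := by
      by_contra h
      have h1 : u + 1 < v := by omega
      have hmem : g (u + 1) ∈ (Finset.range n).image g :=
        Finset.mem_image.mpr ⟨u + 1, Finset.mem_range.mpr (by omega), rfl⟩
      rcases hmid _ hmem with hle | hle
      · have := mono u (u + 1) (by omega) (by omega)
        rw [hgu] at this
        exact absurd this (not_lt.mpr hle)
      · have := mono (u + 1) v h1 hv
        rw [hgv] at this
        exact absurd this (not_lt.mpr hle)
    exact ⟨u, by omega, hgu.symm, by rw [← hgv, hveq]⟩
  constructor
  · intro p q s h1 h2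
    obtain ⟨u, hun, hpu, hqu⟩ := consec p q h1
    obtain ⟨v, hvn, hqv, hsv⟩ := consec q s h2
    have hveq : v = u + 1 := by
      have heq : g v = g (u + 1) := by rw [← hqv, hqu]
      exact hinj (Finset.mem_range.mpr (by omega)) (Finset.mem_range.mpr (by omega)) heq
    subst hveq
    have b1 := hg u (by omega)
    have b2 := hg (u + 1) (by omega)
    have b3 := hg (u + 1 + 1) (by omega)
    rw [hpu, hqu, hsv]
    push_cast at b2 b3
    nlinarith [b1.1, b1.2, b2.1, b2.2, b3.1, b3.2]
  · rw [Finset.card_image_of_injOn hinj, Finset.card_range]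

/-- The key induction: if an interval of length `K^j` is covered by at most `j`
of the parts, some part contains a convex set of size `√(K-1) + 1`. -/
lemma key_lemma (r : ℕ) (A : Fin r → Finset ℤ) (K : ℕ) (hK : 1 ≤ K) :
    ∀ j : ℕ, ∀ a : ℤ, ∀ s : Finset (Fin r),
      s.card ≤ j →
      (∀ x ∈ Finset.Icc (a + 1) (a + (K : ℤ) ^ j), ∃ i ∈ s, x ∈ A i) →
      ∃ i, ∃ B ⊆ A i, IsConvexSet B ∧ B.card = Nat.sqrt (K - 1) + 1 := by
  intro j
  induction j with
  | zero =>
    intro a s hs hcol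
    have hmem : a + 1 ∈ Finset.Icc (a + 1) (a + (K : ℤ) ^ 0) := by
      simp [Finset.mem_Icc]
    obtain ⟨i, hi, _⟩ := hcol _ hmem
    have : s = ∅ := Finset.card_eq_zero.mp (Nat.le_zero.mp hs)
    simp [this] at hi
  | succ j ih =>
    intro a s hs hcol
    have hKj : (1 : ℤ) ≤ (K : ℤ) ^ j := one_le_pow₀ (by exact_mod_cast hK)
    have hKj1 : (1 : ℤ) ≤ (K : ℤ) ^ (j + 1) := one_le_pow₀ (by exact_mod_cast hK)
    have hmem : a + 1 ∈ Finset.Icc (a + 1) (a + (K : ℤ) ^ (j + 1)) := by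
      rw [Finset.mem_Icc]; constructor <;> linarith
    obtain ⟨i₀, hi₀s, _⟩ := hcol _ hmem
    by_cases hcase : ∃ t : ℕ, t < K ∧
        ∀ x ∈ Finset.Icc (a + (t : ℤ) * (K : ℤ) ^ j + 1)
          (a + (t : ℤ) * (K : ℤ) ^ j + (K : ℤ) ^ j), x ∉ A i₀
    · -- some block misses colour i₀ : recurse with one colour fewer
      obtain ⟨t, htK, hblock⟩ := hcase
      apply ih (a + (t : ℤ) * (K : ℤ) ^ j) (s.erase i₀)
      · rw [Finset.card_erase_of_mem hi₀s]; omega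
      · intro x hx
        rw [Finset.mem_Icc] at hx
        have htK' : (t : ℤ) + 1 ≤ (K : ℤ) := by exact_mod_cast htK
        have hxI : x ∈ Finset.Icc (a + 1) (a + (K : ℤ) ^ (j + 1)) := by
          rw [Finset.mem_Icc]
          constructor
          · have : (0 : ℤ) ≤ (t : ℤ) * (K : ℤ) ^ j :=
              mul_nonneg (Int.natCast_nonneg t) (by linarith)
            linarith
          · have : ((t : ℤ) + 1) * (K : ℤ) ^ j ≤ (K : ℤ) * (K : ℤ) ^ j :=
              mul_le_mul_of_nonneg_right htK' (by linarith)
            have hpow : (K : ℤ) ^ (j + 1) = (K : ℤ) * (K : ℤ) ^ j := pow_succ' _ _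
            rw [hpow]; nlinarith
        obtain ⟨i, his, hxAi⟩ := hcol x hxI
        refine ⟨i, Finset.mem_erase.mpr ⟨?_, his⟩, hxAi⟩
        intro hii
        exact hblock x (Finset.mem_Icc.mpr ⟨hx.1, hx.2⟩) (hii ▸ hxAi)
    · -- colour i₀ meets every block : build a convex set directly
      push_neg at hcase
      have hsel : ∀ t : ℕ, ∃ x : ℤ, t < K →
          (a + (t : ℤ) * (K : ℤ) ^ j + 1 ≤ x ∧
           x ≤ a + (t : ℤ) * (K : ℤ) ^ j + (K : ℤ) ^ j ∧ x ∈ A i₀) := by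
        intro t
        by_cases ht : t < K
        · obtain ⟨x, hxI, hxA⟩ := hcase t ht
          rw [Finset.mem_Icc] at hxI
          exact ⟨x, fun _ => ⟨hxI.1, hxI.2, hxA⟩⟩
        · exact ⟨0, fun h => absurd h ht⟩
      choose f hf using hsel
      set n := Nat.sqrt (K - 1) + 1 with hn
      set g : ℕ → ℤ := fun u => f (u * u) with hgdef
      have husq : ∀ u : ℕ, u < n → u * u < K := by
        intro u hu
        have h1 : u ≤ Nat.sqrt (K - 1) := by omega
        have h2 : u * u ≤ Nat.sqrt (K - 1) * Nat.sqrt (K - 1) := Nat.mul_le_mul h1 h1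
        have h3 : Nat.sqrt (K - 1) * Nat.sqrt (K - 1) ≤ K - 1 := by
          simpa [pow_two] using Nat.sqrt_le' (K - 1)
        omega
      have hg : ∀ u : ℕ, u < n →
          a + (u : ℤ) ^ 2 * (K : ℤ) ^ j + 1 ≤ g u ∧
          g u ≤ a + ((u : ℤ) ^ 2 + 1) * (K : ℤ) ^ j := by
        intro u hu
        obtain ⟨hb1, hb2, _⟩ := hf (u * u) (husq u hu)
        have hc : ((u * u : ℕ) : ℤ) = (u : ℤ) ^ 2 := by push_cast; ring
        constructor
        · rw [hgdef]; rw [hc] at hb1; linarith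
        · rw [hgdef]; rw [hc] at hb2; linarith
      obtain ⟨hconv, hcard⟩ := blocks_convex ((K : ℤ) ^ j) a hKj n g hg
      refine ⟨i₀, (Finset.range n).image g, ?_, hconv, hcard⟩
      intro b hb
      obtain ⟨u, hu, hgu⟩ := Finset.mem_image.mp hb
      rw [Finset.mem_range] at hu
      exact hgu ▸ (hf (u * u) (husq u hu)).2.2

lemma convMax_ge (A B : Finset ℤ) (hBA : B ⊆ A) (hconv : IsConvexSet B) :
    B.card ≤ convMax A := by
  apply Finset.le_sup (f := Finset.card)
  exact Finset.mem_filter.mpr ⟨Finset.mem_powerset.mpr hBA, hconv⟩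

/-- If `N ≥ 3^(r² + r)` and `{1, …, N}` is partitioned into `r` parts, then some
part satisfies `C(A_i) ≥ ⌊N^(1/(2r)) / (4 · 3^(r/2))⌋`. -/
theorem stmt8 (r N : ℕ) (hr : 0 < r) (hN : 3 ^ (r ^ 2 + r) ≤ N)
    (A : Fin r → Finset ℤ)
    (hdisj : ∀ i j, i ≠ j → Disjoint (A i) (A j))
    (hcover : Finset.univ.biUnion A = Finset.Icc (1 : ℤ) (N : ℤ)) :
    ∃ i, ⌊(N : ℝ) ^ ((1 : ℝ) / (2 * r)) / (4 * 3 ^ ((r : ℝ) / 2))⌋₊ ≤ convMax (A i) := by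
  have hr0 : (r : ℝ) ≠ 0 := Nat.cast_ne_zero.mpr hr.ne'
  have hN1 : 1 ≤ N := le_trans (Nat.one_le_pow _ _ (by norm_num)) hN
  have hN0 : (0 : ℝ) < (N : ℝ) := by exact_mod_cast hN1
  set x : ℝ := (N : ℝ) ^ ((1 : ℝ) / r) with hxdef
  have hx0 : 0 ≤ x := Real.rpow_nonneg hN0.le _
  have hxr : x ^ r = (N : ℝ) := by
    rw [hxdef, ← Real.rpow_natCast ((N : ℝ) ^ ((1 : ℝ) / r)) r,
      ← Real.rpow_mul hN0.le]
    rw [show (1 : ℝ) / r * r = 1 by field_simp]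
    exact Real.rpow_one _
  have hx3 : (3 : ℝ) ≤ x := by
    have h3N : (3 : ℝ) ^ r ≤ (N : ℝ) := by
      have h1 : (3 : ℕ) ^ r ≤ 3 ^ (r ^ 2 + r) :=
        Nat.pow_le_pow_right (by norm_num) (by nlinarith)
      exact_mod_cast le_trans h1 hN
    have := h3N.trans_eq hxr.symm
    exact le_of_pow_le_pow_left₀ hr.ne' hx0 this
  set K : ℕ := ⌊x⌋₊ with hKdef
  have hKx : (K : ℝ) ≤ x := Nat.floor_le hx0
  have hxK : x < (K : ℝ) + 1 := Nat.lt_floor_add_one x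
  have hK3 : 3 ≤ K := by
    have : ((3 : ℕ) : ℝ) ≤ x := by exact_mod_cast hx3
    exact Nat.le_floor this
  have hK1 : 1 ≤ K := by omega
  have hKrN : K ^ r ≤ N := by
    have h1 : ((K : ℝ)) ^ r ≤ x ^ r := pow_le_pow_left₀ (Nat.cast_nonneg K) hKx r
    rw [hxr] at h1
    exact_mod_cast h1
  -- apply the key lemma
  have hcol : ∀ z ∈ Finset.Icc ((0 : ℤ) + 1) (0 + (K : ℤ) ^ r),
      ∃ i ∈ (Finset.univ : Finset (Fin r)), z ∈ A i := by
    intro z hz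
    rw [Finset.mem_Icc] at hz
    have hzN : z ∈ Finset.Icc (1 : ℤ) (N : ℤ) := by
      rw [Finset.mem_Icc]
      refine ⟨by linarith [hz.1], ?_⟩
      have : ((K ^ r : ℕ) : ℤ) ≤ (N : ℤ) := by exact_mod_cast hKrN
      push_cast at this
      linarith [hz.2]
    rw [← hcover] at hzN
    obtain ⟨i, _, hzi⟩ := Finset.mem_biUnion.mp hzN
    exact ⟨i, Finset.mem_univ i, hzi⟩
  obtain ⟨i, B, hBA, hBconv, hBcard⟩ :=
    key_lemma r A K hK1 r 0 Finset.univ (by simp) hcol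
  refine ⟨i, ?_⟩
  have hCB : B.card ≤ convMax (A i) := convMax_ge (A i) B hBA hBconv
  -- arithmetic: the floor is at most Nat.sqrt (K-1) + 1
  set m : ℕ := ⌊(N : ℝ) ^ ((1 : ℝ) / (2 * r)) / (4 * 3 ^ ((r : ℝ) / 2))⌋₊ with hmdef
  have hmsq : m ≤ Nat.sqrt (K - 1) := by
    rw [Nat.le_sqrt]
    -- show (m*m : ℝ) < (K-1 : ℕ)
    set y : ℝ := (N : ℝ) ^ ((1 : ℝ) / (2 * r)) with hydef
    have hy0 : 0 ≤ y := Real.rpow_nonneg hN0.le _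
    have hden : (0 : ℝ) < 4 * 3 ^ ((r : ℝ) / 2) := by positivity
    have hT0 : (0 : ℝ) ≤ y / (4 * 3 ^ ((r : ℝ) / 2)) := div_nonneg hy0 hden.le
    have hmT : (m : ℝ) ≤ y / (4 * 3 ^ ((r : ℝ) / 2)) := Nat.floor_le hT0
    have hyy : y * y = x := by
      have hsum : (1 : ℝ) / (2 * (r : ℝ)) + 1 / (2 * (r : ℝ)) = 1 / (r : ℝ) := by
        field_simp <;> norm_num
      rw [hydef, hxdef, ← Real.rpow_add hN0, hsum]
    have h3r : (3 : ℝ) ≤ 3 ^ ((r : ℝ) / 2) * 3 ^ ((r : ℝ) / 2) := by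
      rw [← Real.rpow_add (by norm_num : (0:ℝ) < 3)]
      have : (r : ℝ) / 2 + (r : ℝ) / 2 = (r : ℝ) := by ring
      rw [this]
      calc (3 : ℝ) = 3 ^ (1 : ℝ) := (Real.rpow_one 3).symm
        _ ≤ 3 ^ (r : ℝ) := by
            apply Real.rpow_le_rpow_left_iff (by norm_num : (1:ℝ) < 3) |>.mpr
            exact_mod_cast hr
    have hmm : (m : ℝ) * m ≤ x / 48 := by
      have h1 : (m : ℝ) * m ≤ (y / (4 * 3 ^ ((r : ℝ) / 2))) * (y / (4 * 3 ^ ((r : ℝ) / 2))) :=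
        mul_le_mul hmT hmT (Nat.cast_nonneg m) hT0
      have h3p : (0 : ℝ) < 3 ^ ((r : ℝ) / 2) := Real.rpow_pos_of_pos (by norm_num) _
      have h2 : (y / (4 * 3 ^ ((r : ℝ) / 2))) * (y / (4 * 3 ^ ((r : ℝ) / 2)))
          = x / (16 * (3 ^ ((r : ℝ) / 2) * 3 ^ ((r : ℝ) / 2))) := by
        rw [← hyy]; field_simp; ring
      rw [h2] at h1
      have h48 : (48 : ℝ) ≤ 16 * (3 ^ ((r : ℝ) / 2) * 3 ^ ((r : ℝ) / 2)) := by linarith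
      have h3 : x / (16 * (3 ^ ((r : ℝ) / 2) * 3 ^ ((r : ℝ) / 2))) ≤ x / 48 := by
        gcongr
      linarith
    have hK1R : ((K - 1 : ℕ) : ℝ) = (K : ℝ) - 1 := by
      have : (1 : ℕ) ≤ K := hK1
      push_cast [Nat.cast_sub this]
      ring
    have hfin : (m : ℝ) * m < ((K - 1 : ℕ) : ℝ) := by
      rw [hK1R]
      have : x / 48 ≤ x - 2 := by linarith
      linarith
    exact_mod_cast hfin.le
  calc m ≤ Nat.sqrt (K - 1) + 1 := by omega
    _ = B.card := hBcard.symm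
    _ ≤ convMax (A i) := hCB
end

section
/- For any positive integer r and any bound N_0, there exists an integer N ≥ N_0 and a partition [N] = A_1 ∪ ⋯ ∪ A_r of [N] into r parts such that max{R_2(A_i) : 1 ≤ i ≤ r} ≤ 2·(r−1)!·N^(1/r) and max{C(A_i) : 1 ≤ i ≤ r} ≤ r!·N^(1/r). -/
open scoped Classical Pointwise

namespace Stmt10Aux

open Finset

lemma consecIn_filter {B : Finset ℤ} {u v a d : ℤ}
    (h : ConsecIn (B.filter (fun x => u ≤ x ∧ x ≤ v)) a d) : ConsecIn B a d := by
  obtain ⟨ha, hd, hlt, hcons⟩ := h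
  simp only [mem_filter] at ha hd
  refine ⟨ha.1, hd.1, hlt, ?_⟩
  intro c hc
  by_contra hcon
  push_neg at hcon
  obtain ⟨h1, h2⟩ := hcon
  have hcf : c ∈ B.filter (fun x => u ≤ x ∧ x ≤ v) := by
    simp only [mem_filter]
    exact ⟨hc, by omega, by omega⟩
  rcases hcons c hcf with h | h <;> omega

lemma isRegular_filter {L : ℝ} {B : Finset ℤ} (u v : ℤ) (h : IsRegularSet L B) :
    IsRegularSet L (B.filter (fun x => u ≤ x ∧ x ≤ v)) := by
  obtain ⟨X, hX, hg⟩ := h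
  exact ⟨X, hX, fun a d hc => hg a d (consecIn_filter hc)⟩

lemma isConvex_filter {B : Finset ℤ} (u v : ℤ) (h : IsConvexSet B) :
    IsConvexSet (B.filter (fun x => u ≤ x ∧ x ≤ v)) :=
  fun a d e h1 h2 => h a d e (consecIn_filter h1) (consecIn_filter h2)

lemma consecIn_image {B : Finset ℤ} {c a d : ℤ}
    (h : ConsecIn (B.image (fun x => c + x)) a d) : ConsecIn B (a - c) (d - c) := by
  obtain ⟨ha, hd, hlt, hcons⟩ := h
  simp only [mem_image] at ha hd
  obtain ⟨a0, ha0, rfl⟩ := ha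
  obtain ⟨d0, hd0, rfl⟩ := hd
  have e1 : c + a0 - c = a0 := by ring
  have e2 : c + d0 - c = d0 := by ring
  rw [e1, e2]
  refine ⟨ha0, hd0, by omega, ?_⟩
  intro e he
  rcases hcons (c + e) (mem_image_of_mem _ he) with h | h
  · left; omega
  · right; omega

lemma isRegular_image {L : ℝ} {B : Finset ℤ} (c : ℤ) (h : IsRegularSet L B) :
    IsRegularSet L (B.image (fun x => c + x)) := by
  obtain ⟨X, hX, hg⟩ := h
  refine ⟨X, hX, fun a d hc => ?_⟩
  have h2 := hg _ _ (consecIn_image hc)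
  have e : ((d - c : ℤ) : ℝ) - ((a - c : ℤ) : ℝ) = (d : ℝ) - (a : ℝ) := by push_cast; ring
  rw [e] at h2
  exact h2

lemma isConvex_image {B : Finset ℤ} (c : ℤ) (h : IsConvexSet B) :
    IsConvexSet (B.image (fun x => c + x)) := by
  intro a d e h1 h2
  have := h _ _ _ (consecIn_image h1) (consecIn_image h2)
  omega

lemma span_ge (X : ℝ) (hX : 0 ≤ X) :
    ∀ (n : ℕ) (B : Finset ℤ) (hne : B.Nonempty), B.card = n →
    (∀ a d, ConsecIn B a d → X ≤ (d : ℝ) - (a : ℝ)) →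
    X * ((B.card : ℝ) - 1) ≤ ((B.max' hne : ℤ) : ℝ) - ((B.min' hne : ℤ) : ℝ) := by
  intro n
  induction n with
  | zero =>
    intro B hne hcard _
    rw [Finset.card_eq_zero] at hcard
    subst hcard
    exact absurd hne (by simp)
  | succ n ih =>
    intro B hne hcard hgap
    by_cases h1 : B.card ≤ 1
    · have hmm : B.max' hne = B.min' hne := by
        exact Finset.card_le_one.mp h1 (B.max' hne) (B.max'_mem hne) (B.min' hne) (B.min'_mem hne)
      rw [hmm, hcard]
      have : n = 0 := by omega
      subst this
      norm_num
    · push_neg at h1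
      set m := B.min' hne with hm
      have hmB : m ∈ B := B.min'_mem hne
      set B' := B.erase m with hB'
      have hcard' : B'.card = n := by
        rw [hB', Finset.card_erase_of_mem hmB, hcard]
        omega
      have hne' : B'.Nonempty := Finset.card_pos.mp (by omega)
      have hsub : B' ⊆ B := Finset.erase_subset _ _
      have hmem_gt : ∀ y ∈ B', m < y := fun y hy =>
        lt_of_le_of_ne (B.min'_le y (hsub hy)) (Ne.symm (Finset.ne_of_mem_erase hy))
      have hconsec' : ∀ a d, ConsecIn B' a d → ConsecIn B a d := by
        rintro a d ⟨ha, hd, hlt, hcons⟩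
        refine ⟨hsub ha, hsub hd, hlt, fun c hc => ?_⟩
        by_cases hcm : c = m
        · left; rw [hcm]; exact le_of_lt (hmem_gt a ha)
        · exact hcons c (Finset.mem_erase.mpr ⟨hcm, hc⟩)
      have hmaxne : B.max' hne ≠ m := ne_of_gt (B.min'_lt_max'_of_card (by omega))
      have hmaxmem : B.max' hne ∈ B' := Finset.mem_erase.mpr ⟨hmaxne, B.max'_mem hne⟩
      have hmax' : B'.max' hne' = B.max' hne := by
        apply le_antisymm
        · exact B.le_max' _ (hsub (B'.max'_mem hne'))
        · exact B'.le_max' _ hmaxmem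
      have hmincons : ConsecIn B m (B'.min' hne') := by
        refine ⟨hmB, hsub (B'.min'_mem hne'), hmem_gt _ (B'.min'_mem hne'), fun c hc => ?_⟩
        by_cases hcm : c = m
        · left; exact le_of_eq hcm
        · right; exact B'.min'_le c (Finset.mem_erase.mpr ⟨hcm, hc⟩)
      have hstep := hgap m (B'.min' hne') hmincons
      have hih := ih B' hne' hcard' (fun a d hc => hgap a d (hconsec' a d hc))
      rw [hcard', hmax'] at hih
      rw [hcard]
      have hn1 : 1 ≤ n := by omega
      have hcast : ((n + 1 : ℕ) : ℝ) - 1 = ((n : ℕ) : ℝ) - 1 + 1 := by push_cast; ring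
      rw [hcast, mul_add, mul_one]
      linarith

lemma exists_next {B : Finset ℤ} {x y : ℤ} (hx : x ∈ B) (hy : y ∈ B) (hxy : x < y) :
    ∃ z, ConsecIn B x z ∧ z ≤ y := by
  have hne : (B.filter (fun w => x < w)).Nonempty := ⟨y, by simp [hy, hxy]⟩
  set z := (B.filter (fun w => x < w)).min' hne with hz
  have hzmem := Finset.min'_mem _ hne
  simp only [mem_filter] at hzmem
  refine ⟨z, ⟨hx, hzmem.1, hzmem.2, ?_⟩, Finset.min'_le _ _ (by simp [hy, hxy])⟩
  intro c hc
  by_cases h : x < c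
  · right; exact Finset.min'_le _ _ (by simp [hc, h])
  · left; omega

lemma gap_mono {B : Finset ℤ} (hconv : IsConvexSet B) :
    ∀ (n : ℕ) (a b c d : ℤ), ConsecIn B a b → ConsecIn B c d → b ≤ c → (c - b).toNat = n →
    b - a ≤ d - c := by
  intro n
  induction n using Nat.strong_induction_on with
  | _ n ih =>
    intro a b c d h1 h2 hbc hn
    rcases eq_or_lt_of_le hbc with heq | hlt
    · subst heq
      exact le_of_lt (hconv a b d h1 h2)
    · obtain ⟨e, he, hey⟩ := exists_next h1.2.1 h2.1 hlt
      have h3 : b - a < e - b := hconv a b e h1 he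
      have hbe : b < e := he.2.2.1
      have h4 : e - b ≤ d - c := by
        refine ih (c - e).toNat (by omega) b e c d he h2 hey rfl
      omega

lemma card_le_sum_blocks (B : Finset ℤ) (s : Finset ℤ) (M : ℤ)
    (h : ∀ x ∈ B, ∃ k ∈ s, M * k + 1 ≤ x ∧ x ≤ M * k + M) :
    B.card ≤ ∑ k ∈ s, (B.filter (fun x => M * k + 1 ≤ x ∧ x ≤ M * k + M)).card := by
  calc B.card ≤ (s.biUnion (fun k => B.filter (fun x => M * k + 1 ≤ x ∧ x ≤ M * k + M))).card := by
        apply Finset.card_le_card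
        intro x hx
        obtain ⟨k, hk, h1, h2⟩ := h x hx
        exact Finset.mem_biUnion.mpr ⟨k, hk, by simp [hx, h1, h2]; omega⟩
    _ ≤ _ := Finset.card_biUnion_le

lemma block_idx {M x : ℤ} (hM : 0 < M) : M * ((x - 1) / M) + 1 ≤ x ∧ x ≤ M * ((x - 1) / M) + M := by
  have h1 := Int.mul_ediv_add_emod (x - 1) M
  have h2 := Int.emod_nonneg (x - 1) (ne_of_gt hM)
  have h3 := Int.emod_lt_of_pos (x - 1) hM
  constructor <;> linarith

lemma block_unique {M k k' x : ℤ} (hM : 0 < M) (h1 : M * k + 1 ≤ x) (h2 : x ≤ M * k + M)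
    (h3 : M * k' + 1 ≤ x) (h4 : x ≤ M * k' + M) : k = k' := by
  by_contra h
  rcases lt_or_gt_of_ne h with hlt | hlt
  · have h5 : M * (k + 1) ≤ M * k' := mul_le_mul_of_nonneg_left (by omega) hM.le
    rw [mul_add, mul_one] at h5
    linarith
  · have h5 : M * (k' + 1) ≤ M * k := mul_le_mul_of_nonneg_left (by omega) hM.le
    rw [mul_add, mul_one] at h5
    linarith

lemma block_mono {M x y : ℤ} (hM : 0 < M) (h : x ≤ y) : (x - 1) / M ≤ (y - 1) / M :=
  Int.ediv_le_ediv hM (by omega)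


open Finset

lemma regMax_le {A : Finset ℤ} {m : ℕ} (h : ∀ B ⊆ A, IsRegularSet 2 B → B.card ≤ m) :
    regMax 2 A ≤ m := by
  apply Finset.sup_le
  intro B hB
  simp only [Finset.mem_filter, Finset.mem_powerset] at hB
  exact h B hB.1 hB.2

lemma convMax_le {A : Finset ℤ} {m : ℕ} (h : ∀ B ⊆ A, IsConvexSet B → B.card ≤ m) :
    convMax A ≤ m := by
  apply Finset.sup_le
  intro B hB
  simp only [Finset.mem_filter, Finset.mem_powerset] at hB
  exact h B hB.1 hB.2

lemma rpow_inv_pow (b m : ℕ) (hm : m ≠ 0) : ((b ^ m : ℕ) : ℝ) ^ ((1 : ℝ) / (m : ℝ)) = (b : ℝ) := by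
  have hb0 : (0 : ℝ) ≤ (b : ℝ) := Nat.cast_nonneg b
  have hm0 : ((m : ℕ) : ℝ) ≠ 0 := Nat.cast_ne_zero.mpr hm
  push_cast
  rw [← Real.rpow_natCast (b : ℝ) m, ← Real.rpow_mul hb0]
  rw [mul_one_div, div_self hm0, Real.rpow_one]

lemma run_count (M p₀ c : ℤ) (hM : 0 < M) (hc0 : 0 ≤ c) (hcp : c < p₀)
    (B : Finset ℤ) (hne : B.Nonempty)
    (hmiss : ∀ k : ℤ, k % p₀ = c → ∀ x ∈ B, ¬(M * k + 1 ≤ x ∧ x ≤ M * k + M))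
    (hgap : ∀ a d, ConsecIn B a d → d - a ≤ M)
    (p : ℕ) (hper : ∀ k : ℤ, (B.filter (fun x => M * k + 1 ≤ x ∧ x ≤ M * k + M)).card ≤ p) :
    (B.card : ℤ) ≤ (p₀ - 1) * p := by
  set k₁ := (B.min' hne - 1) / M with hk₁
  set k₂ := (B.max' hne - 1) / M with hk₂
  have hk12 : k₁ ≤ k₂ := block_mono hM (B.min'_le _ (B.max'_mem hne))
  have hmin_blk := block_idx (M := M) (x := B.min' hne) hM
  have hmax_blk := block_idx (M := M) (x := B.max' hne) hM
  have hnomiss : ∀ k, k₁ ≤ k → k ≤ k₂ → k % p₀ ≠ c := by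
    intro k hka hkb hkc
    rcases eq_or_lt_of_le hka with heq | hk1lt
    · exact hmiss k hkc _ (B.min'_mem hne) (heq ▸ ⟨hmin_blk.1, hmin_blk.2⟩)
    rcases eq_or_lt_of_le hkb with heq | hk2lt
    · exact hmiss k hkc _ (B.max'_mem hne) (heq ▸ ⟨hmax_blk.1, hmax_blk.2⟩)
    · have hSne : (B.filter (fun w => w ≤ M * k)).Nonempty := by
        refine ⟨B.min' hne, ?_⟩
        simp only [mem_filter]
        refine ⟨B.min'_mem hne, ?_⟩
        have h5 : M * (k₁ + 1) ≤ M * k := mul_le_mul_of_nonneg_left (by omega) hM.le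
        rw [mul_add, mul_one] at h5
        linarith [hmin_blk.2]
      obtain ⟨x, hxmem, hxmax⟩ : ∃ x ∈ B.filter (fun w => w ≤ M * k),
          ∀ w ∈ B.filter (fun w => w ≤ M * k), w ≤ x :=
        ⟨_, Finset.max'_mem _ hSne, fun w hw => Finset.le_max' _ w hw⟩
      simp only [mem_filter] at hxmem
      have hmaxB_gt : x < B.max' hne := by
        have h5 : M * (k + 1) ≤ M * k₂ := mul_le_mul_of_nonneg_left (by omega) hM.le
        rw [mul_add, mul_one] at h5
        linarith [hmax_blk.1, hxmem.2]
      obtain ⟨y, hcons, hyle⟩ := exists_next hxmem.1 (B.max'_mem hne) hmaxB_gt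
      have hyB := hcons.2.1
      have hxy := hcons.2.2.1
      have hyk : M * k < y := by
        by_contra hy
        push_neg at hy
        have h6 := hxmax y (by simp only [mem_filter]; exact ⟨hyB, hy⟩)
        omega
      have hy_notblk := hmiss k hkc y hyB
      have hgapxy := hgap x y hcons
      rcases not_and_or.mp hy_notblk with h | h
      · push_neg at h
        omega
      · push_neg at h
        linarith [hxmem.2]
  have hcount := card_le_sum_blocks B (Finset.Icc k₁ k₂) M (fun x hx => by
    refine ⟨(x - 1) / M, ?_, (block_idx hM).1, (block_idx hM).2⟩
    simp only [Finset.mem_Icc]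
    exact ⟨block_mono hM (B.min'_le x hx), block_mono hM (B.le_max' x hx)⟩)
  have hsum : ∑ k ∈ Finset.Icc k₁ k₂, (B.filter (fun x => M * k + 1 ≤ x ∧ x ≤ M * k + M)).card
      ≤ (Finset.Icc k₁ k₂).card * p := by
    have := Finset.sum_le_card_nsmul (Finset.Icc k₁ k₂)
      (fun k => (B.filter (fun x => M * k + 1 ≤ x ∧ x ≤ M * k + M)).card) p
      (fun k _ => hper k)
    simpa [smul_eq_mul] using this
  have hrun : k₂ - k₁ ≤ p₀ - 2 := by
    by_contra hcon
    push_neg at hcon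
    set t := (c - k₁) % p₀ with ht
    have hp0 : 0 < p₀ := by omega
    have ht0 : 0 ≤ t := Int.emod_nonneg _ (by omega)
    have htp : t < p₀ := Int.emod_lt_of_pos _ hp0
    have hmod : (k₁ + t) % p₀ = c := by
      have hq := Int.mul_ediv_add_emod (c - k₁) p₀
      have hkt : k₁ + t = c + p₀ * (-((c - k₁) / p₀)) := by
        rw [mul_neg]
        linarith
      rw [hkt, Int.add_mul_emod_self_left]
      exact Int.emod_eq_of_lt hc0 hcp
    exact hnomiss (k₁ + t) (by omega) (by omega) hmod
  have hIcc : ((Finset.Icc k₁ k₂).card : ℤ) ≤ p₀ - 1 := by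
    rw [Int.card_Icc]
    omega
  calc (B.card : ℤ) ≤ ((∑ k ∈ Finset.Icc k₁ k₂,
        (B.filter (fun x => M * k + 1 ≤ x ∧ x ≤ M * k + M)).card : ℕ) : ℤ) := by
        exact_mod_cast hcount
    _ ≤ (((Finset.Icc k₁ k₂).card * p : ℕ) : ℤ) := by exact_mod_cast hsum
    _ ≤ (p₀ - 1) * p := by
        push_cast
        exact mul_le_mul_of_nonneg_right hIcc (by positivity)


open Finset

lemma mem_ite_empty {P : Prop} [Decidable P] {s : Finset ℤ} {x : ℤ} :
    (x ∈ (if P then s else ∅)) ↔ P ∧ x ∈ s := by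
  split_ifs with h <;> simp [h]

theorem key (b : ℕ) (hb : 1 ≤ b) : ∀ r : ℕ, ∃ A : Fin (r + 1) → Finset ℤ,
    (∀ i j, i ≠ j → Disjoint (A i) (A j)) ∧
    Finset.univ.biUnion A = Finset.Icc 1 ((b : ℤ) ^ (r + 1)) ∧
    (∀ i, ∀ B ⊆ A i, IsRegularSet 2 B → B.card ≤ 2 * r.factorial * b) ∧
    (∀ i, ∀ B ⊆ A i, IsConvexSet B → B.card ≤ (r + 1).factorial * b) := by
  intro r
  induction r with
  | zero =>
    refine ⟨fun _ => Finset.Icc 1 (b : ℤ), ?_, ?_, ?_, ?_⟩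
    · intro i j hij
      exact absurd (Fin.ext (by omega : i.val = j.val)) hij
    · rw [pow_one]
      apply Finset.Subset.antisymm
      · intro x hx
        obtain ⟨i, _, hxi⟩ := Finset.mem_biUnion.mp hx
        exact hxi
      · intro x hx
        exact Finset.mem_biUnion.mpr ⟨0, Finset.mem_univ _, hx⟩
    · intro i B hB _
      calc B.card ≤ (Finset.Icc (1 : ℤ) (b : ℤ)).card := Finset.card_le_card hB
        _ = b := by rw [Int.card_Icc]; omega
        _ ≤ 2 * Nat.factorial 0 * b := by simp [Nat.factorial]; omega
    · intro i B hB _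
      calc B.card ≤ (Finset.Icc (1 : ℤ) (b : ℤ)).card := Finset.card_le_card hB
        _ = b := by rw [Int.card_Icc]; omega
        _ ≤ Nat.factorial 1 * b := by simp [Nat.factorial]
  | succ r ih =>
    obtain ⟨A, hdisj, hunion, hreg, hconv⟩ := ih
    set M : ℤ := (b : ℤ) ^ (r + 1) with hMdef
    have hb0 : (0 : ℤ) < (b : ℤ) := by exact_mod_cast hb
    have hM0 : 0 < M := pow_pos hb0 _
    have hAsub : ∀ j, A j ⊆ Finset.Icc (1 : ℤ) M := by
      intro j x hx
      rw [← hunion]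
      exact Finset.mem_biUnion.mpr ⟨j, Finset.mem_univ j, hx⟩
    set piv : ℕ → Fin (r + 2) := fun k => ⟨k % (r + 2), Nat.mod_lt _ (by omega)⟩ with hpiv
    set ek : ℕ → Fin (r + 1) → Fin (r + 2) := fun k => (piv k).succAbove with hek
    set A' : Fin (r + 2) → Finset ℤ := fun i =>
      (Finset.range b).biUnion fun k =>
        Finset.univ.biUnion fun j =>
          if ek k j = i then (A j).image (fun x => M * k + x) else ∅ with hA'
    have hmemA' : ∀ (i : Fin (r + 2)) (x : ℤ),
        x ∈ A' i ↔ ∃ k, k < b ∧ ∃ j, ek k j = i ∧ x - M * (k : ℤ) ∈ A j := by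
      intro i x
      simp only [hA', Finset.mem_biUnion, Finset.mem_range, Finset.mem_univ, true_and,
        mem_ite_empty, Finset.mem_image]
      constructor
      · rintro ⟨k, hk, j, hj, a, ha, rfl⟩
        exact ⟨k, hk, j, hj, by simpa using ha⟩
      · rintro ⟨k, hk, j, hj, ha⟩
        exact ⟨k, hk, j, hj, x - M * k, ha, by ring⟩
    have hA'sub : ∀ i, A' i ⊆ Finset.Icc 1 (M * b) := by
      intro i x hx
      obtain ⟨k, hk, j, _, ha⟩ := (hmemA' i x).mp hx
      have hbnd := hAsub j ha
      simp only [Finset.mem_Icc] at hbnd ⊢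
      have hk0 : (0 : ℤ) ≤ (k : ℤ) := Int.ofNat_nonneg k
      have hkb : (k : ℤ) + 1 ≤ (b : ℤ) := by exact_mod_cast hk
      constructor
      · have : 0 ≤ M * (k : ℤ) := mul_nonneg hM0.le hk0
        linarith [hbnd.1]
      · have h5 : M * ((k : ℤ) + 1) ≤ M * b := mul_le_mul_of_nonneg_left hkb hM0.le
        rw [mul_add, mul_one] at h5
        linarith [hbnd.2]
    have hblock : ∀ (i : Fin (r + 2)) (k : ℕ), k < b → ∀ x ∈ A' i,
        M * (k : ℤ) + 1 ≤ x → x ≤ M * (k : ℤ) + M →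
        ∃ j, ek k j = i ∧ x - M * (k : ℤ) ∈ A j := by
      intro i k hk x hx h1 h2
      obtain ⟨k', hk', j, hj, ha⟩ := (hmemA' i x).mp hx
      have hbnd := hAsub j ha
      simp only [Finset.mem_Icc] at hbnd
      have hkk : (k' : ℤ) = (k : ℤ) :=
        block_unique hM0 (by linarith [hbnd.1]) (by linarith [hbnd.2]) h1 h2
      have hkk' : k' = k := by exact_mod_cast hkk
      subst hkk'
      exact ⟨j, hj, ha⟩
    have hk_range : ∀ (i : Fin (r + 2)) (kz : ℤ) (x : ℤ), x ∈ A' i →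
        M * kz + 1 ≤ x → x ≤ M * kz + M → 0 ≤ kz ∧ kz < b := by
      intro i kz x hx h1 h2
      have hxI := hA'sub i hx
      simp only [Finset.mem_Icc] at hxI
      constructor
      · by_contra h
        push_neg at h
        have h5 : M * kz ≤ M * (-1) := mul_le_mul_of_nonneg_left (by omega) hM0.le
        rw [mul_neg, mul_one] at h5
        linarith [hxI.1]
      · by_contra h
        push_neg at h
        have h5 : M * (b : ℤ) ≤ M * kz := mul_le_mul_of_nonneg_left h hM0.le
        linarith [hxI.2]
    have hmiss : ∀ (i : Fin (r + 2)) (kz : ℤ), kz % ((r : ℤ) + 2) = (i.val : ℤ) →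
        ∀ x ∈ A' i, ¬(M * kz + 1 ≤ x ∧ x ≤ M * kz + M) := by
      rintro i kz hkz x hx ⟨h1, h2⟩
      obtain ⟨hk0, hkb⟩ := hk_range i kz x hx h1 h2
      have hkez : ((kz.toNat : ℕ) : ℤ) = kz := Int.toNat_of_nonneg hk0
      have hkbn : kz.toNat < b := by omega
      obtain ⟨j, hj, _⟩ := hblock i kz.toNat hkbn x hx (by rw [hkez]; exact h1)
        (by rw [hkez]; exact h2)
      have hne : ek kz.toNat j ≠ piv kz.toNat := Fin.succAbove_ne _ _
      apply hne
      rw [hj]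
      apply Fin.ext
      show i.val = kz.toNat % (r + 2)
      have h8 : ((kz.toNat % (r + 2) : ℕ) : ℤ) = (i.val : ℤ) := by
        push_cast
        rw [hkez]
        exact hkz
      exact_mod_cast h8.symm
    have hdisj' : ∀ i i' : Fin (r + 2), i ≠ i' → Disjoint (A' i) (A' i') := by
      intro i i' hnei
      rw [Finset.disjoint_left]
      intro x hx hx'
      obtain ⟨k, hk, j, hj, ha⟩ := (hmemA' i x).mp hx
      obtain ⟨k', hk', j', hj', ha'⟩ := (hmemA' i' x).mp hx'
      have hb1 := hAsub j ha
      have hb2 := hAsub j' ha'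
      simp only [Finset.mem_Icc] at hb1 hb2
      have hkk : (k : ℤ) = (k' : ℤ) := block_unique hM0 (by linarith [hb1.1])
        (by linarith [hb1.2]) (by linarith [hb2.1]) (by linarith [hb2.2])
      have hkk' : k = k' := by exact_mod_cast hkk
      subst hkk'
      have hjj : j = j' := by
        by_contra hjj
        exact (Finset.disjoint_left.mp (hdisj j j' hjj)) ha ha'
      subst hjj
      exact hnei (hj.symm.trans hj')
    have hunion' : Finset.univ.biUnion A' = Finset.Icc 1 (M * b) := by
      apply Finset.Subset.antisymm
      · intro x hx
        obtain ⟨i, _, hxi⟩ := Finset.mem_biUnion.mp hx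
        exact hA'sub i hxi
      · intro x hx
        simp only [Finset.mem_Icc] at hx
        have hblk := block_idx (M := M) (x := x) hM0
        have hdk0 : 0 ≤ (x - 1) / M := Int.ediv_nonneg (by omega) hM0.le
        have hdkb : (x - 1) / M < b := by
          by_contra h
          push_neg at h
          have h5 : M * (b : ℤ) ≤ M * ((x - 1) / M) := mul_le_mul_of_nonneg_left h hM0.le
          linarith [hblk.1, hx.2]
        have hkez : ((((x - 1) / M).toNat : ℕ) : ℤ) = (x - 1) / M := Int.toNat_of_nonneg hdk0
        have hmem : x - M * ((x - 1) / M) ∈ Finset.Icc (1 : ℤ) M := by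
          simp only [Finset.mem_Icc]
          constructor <;> linarith [hblk.1, hblk.2]
        rw [← hunion] at hmem
        obtain ⟨j, _, hj⟩ := Finset.mem_biUnion.mp hmem
        refine Finset.mem_biUnion.mpr ⟨ek ((x - 1) / M).toNat j, Finset.mem_univ _, ?_⟩
        rw [hmemA']
        refine ⟨((x - 1) / M).toNat, by omega, j, rfl, ?_⟩
        rw [hkez]
        exact hj
    have hper_reg : ∀ (i : Fin (r + 2)) (B : Finset ℤ), B ⊆ A' i → IsRegularSet 2 B →
        ∀ kz : ℤ, (B.filter (fun x => M * kz + 1 ≤ x ∧ x ≤ M * kz + M)).card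
          ≤ 2 * r.factorial * b := by
      intro i B hBA hBreg kz
      rcases (B.filter (fun x => M * kz + 1 ≤ x ∧ x ≤ M * kz + M)).eq_empty_or_nonempty
        with he | hne
      · rw [he]; simp
      obtain ⟨x₀, hx₀⟩ := hne
      have hx₀' := hx₀
      simp only [Finset.mem_filter] at hx₀'
      have hx₀A := hBA hx₀'.1
      obtain ⟨hk0, hkb⟩ := hk_range i kz x₀ hx₀A hx₀'.2.1 hx₀'.2.2
      have hkez : ((kz.toNat : ℕ) : ℤ) = kz := Int.toNat_of_nonneg hk0
      have hkbn : kz.toNat < b := by omega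
      obtain ⟨j, hj, _⟩ := hblock i kz.toNat hkbn x₀ hx₀A (by rw [hkez]; exact hx₀'.2.1)
        (by rw [hkez]; exact hx₀'.2.2)
      have hCsub : ∀ x ∈ B.filter (fun x => M * kz + 1 ≤ x ∧ x ≤ M * kz + M),
          x - M * kz ∈ A j := by
        intro x hx
        simp only [Finset.mem_filter] at hx
        obtain ⟨j', hj', ha'⟩ := hblock i kz.toNat hkbn x (hBA hx.1) (by rw [hkez]; exact hx.2.1)
          (by rw [hkez]; exact hx.2.2)
        have hjj : j' = j := Fin.succAbove_right_injective (hj'.trans hj.symm)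
        rw [hkez] at ha'
        rw [← hjj]
        exact ha'
      set C := B.filter (fun x => M * kz + 1 ≤ x ∧ x ≤ M * kz + M) with hC
      have hcard : (C.image (fun x => -(M * kz) + x)).card = C.card :=
        Finset.card_image_of_injective _ (add_right_injective _)
      have hC₀A : C.image (fun x => -(M * kz) + x) ⊆ A j := by
        intro y hy
        simp only [Finset.mem_image] at hy
        obtain ⟨x, hx, rfl⟩ := hy
        have := hCsub x hx
        have he : -(M * kz) + x = x - M * kz := by ring
        rw [he]
        exact this
      have hC₀reg : IsRegularSet 2 (C.image (fun x => -(M * kz) + x)) :=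
        isRegular_image _ (isRegular_filter _ _ hBreg)
      calc C.card = (C.image (fun x => -(M * kz) + x)).card := hcard.symm
        _ ≤ 2 * r.factorial * b := hreg j _ hC₀A hC₀reg
    have hper_conv : ∀ (i : Fin (r + 2)) (B : Finset ℤ), B ⊆ A' i → IsConvexSet B →
        ∀ kz : ℤ, (B.filter (fun x => M * kz + 1 ≤ x ∧ x ≤ M * kz + M)).card
          ≤ (r + 1).factorial * b := by
      intro i B hBA hBconv kz
      rcases (B.filter (fun x => M * kz + 1 ≤ x ∧ x ≤ M * kz + M)).eq_empty_or_nonempty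
        with he | hne
      · rw [he]; simp
      obtain ⟨x₀, hx₀⟩ := hne
      have hx₀' := hx₀
      simp only [Finset.mem_filter] at hx₀'
      have hx₀A := hBA hx₀'.1
      obtain ⟨hk0, hkb⟩ := hk_range i kz x₀ hx₀A hx₀'.2.1 hx₀'.2.2
      have hkez : ((kz.toNat : ℕ) : ℤ) = kz := Int.toNat_of_nonneg hk0
      have hkbn : kz.toNat < b := by omega
      obtain ⟨j, hj, _⟩ := hblock i kz.toNat hkbn x₀ hx₀A (by rw [hkez]; exact hx₀'.2.1)
        (by rw [hkez]; exact hx₀'.2.2)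
      have hCsub : ∀ x ∈ B.filter (fun x => M * kz + 1 ≤ x ∧ x ≤ M * kz + M),
          x - M * kz ∈ A j := by
        intro x hx
        simp only [Finset.mem_filter] at hx
        obtain ⟨j', hj', ha'⟩ := hblock i kz.toNat hkbn x (hBA hx.1) (by rw [hkez]; exact hx.2.1)
          (by rw [hkez]; exact hx.2.2)
        have hjj : j' = j := Fin.succAbove_right_injective (hj'.trans hj.symm)
        rw [hkez] at ha'
        rw [← hjj]
        exact ha'
      set C := B.filter (fun x => M * kz + 1 ≤ x ∧ x ≤ M * kz + M) with hC
      have hcard : (C.image (fun x => -(M * kz) + x)).card = C.card :=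
        Finset.card_image_of_injective _ (add_right_injective _)
      have hC₀A : C.image (fun x => -(M * kz) + x) ⊆ A j := by
        intro y hy
        simp only [Finset.mem_image] at hy
        obtain ⟨x, hx, rfl⟩ := hy
        have := hCsub x hx
        have he : -(M * kz) + x = x - M * kz := by ring
        rw [he]
        exact this
      have hC₀conv : IsConvexSet (C.image (fun x => -(M * kz) + x)) :=
        isConvex_image _ (isConvex_filter _ _ hBconv)
      calc C.card = (C.image (fun x => -(M * kz) + x)).card := hcard.symm
        _ ≤ (r + 1).factorial * b := hconv j _ hC₀A hC₀conv
    have hcast_ivl : ∀ i : Fin (r + 2), ((i.val : ℕ) : ℤ) < (r : ℤ) + 2 := by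
      intro i
      exact_mod_cast i.isLt
    -- regular bound
    have hreg' : ∀ i, ∀ B ⊆ A' i, IsRegularSet 2 B → B.card ≤ 2 * (r + 1).factorial * b := by
      intro i B hBA hBreg
      rcases B.eq_empty_or_nonempty with rfl | hne
      · simp
      obtain ⟨X, hX, hg⟩ := hBreg
      by_cases hcase : ∀ a d, ConsecIn B a d → d - a ≤ M
      · have hrc := run_count M ((r : ℤ) + 2) ((i.val : ℕ) : ℤ) hM0 (by positivity)
          (hcast_ivl i) B hne
          (fun k hk x hx => hmiss i k hk x (hBA hx))
          hcase (2 * r.factorial * b) (fun k => hper_reg i B hBA ⟨X, hX, hg⟩ k)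
        have h9 : (B.card : ℤ) ≤ ((r : ℤ) + 1) * ((2 * r.factorial * b : ℕ) : ℤ) := by
          have : ((r : ℤ) + 2) - 1 = (r : ℤ) + 1 := by ring
          rw [← this]
          exact hrc
        have h10 : B.card ≤ (r + 1) * (2 * r.factorial * b) := by exact_mod_cast h9
        calc B.card ≤ (r + 1) * (2 * r.factorial * b) := h10
          _ = 2 * (r + 1).factorial * b := by rw [Nat.factorial_succ]; ring
      · push_neg at hcase
        obtain ⟨a, d, hcons, hgapbig⟩ := hcase
        have h2X : (M : ℝ) + 1 ≤ 2 * X := by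
          have hub := (hg a d hcons).2
          have hda : (M : ℝ) + 1 ≤ (d : ℝ) - (a : ℝ) := by
            have : M + 1 ≤ d - a := by omega
            exact_mod_cast this
          linarith
        have hper2 : ∀ kz : ℤ,
            (B.filter (fun x => M * kz + 1 ≤ x ∧ x ≤ M * kz + M)).card ≤ 2 := by
          intro kz
          set C := B.filter (fun x => M * kz + 1 ≤ x ∧ x ≤ M * kz + M) with hCdef
          rcases C.eq_empty_or_nonempty with he | hneC
          · rw [he]; simp
          have hCgap : ∀ a d, ConsecIn C a d → X ≤ (d : ℝ) - (a : ℝ) :=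
            fun a d hc => (hg a d (consecIn_filter hc)).1
          have hspan := span_ge X hX.le C.card C hneC rfl hCgap
          have hbnds : ∀ x ∈ C, M * kz + 1 ≤ x ∧ x ≤ M * kz + M := by
            intro x hx
            rw [hCdef] at hx
            exact (Finset.mem_filter.mp hx).2
          have hCmax := hbnds _ (C.max'_mem hneC)
          have hCmin := hbnds _ (C.min'_mem hneC)
          have hwidth : ((C.max' hneC : ℤ) : ℝ) - ((C.min' hneC : ℤ) : ℝ) ≤ (M : ℝ) - 1 := by
            have : (C.max' hneC : ℤ) - (C.min' hneC : ℤ) ≤ M - 1 := by omega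
            exact_mod_cast this
          by_contra hcon
          push_neg at hcon
          have h3 : (3 : ℝ) ≤ (C.card : ℝ) := by exact_mod_cast hcon
          nlinarith
        have hcnt := card_le_sum_blocks B (Finset.Icc 0 ((b : ℤ) - 1)) M (fun x hx => by
          have hxI := hA'sub i (hBA hx)
          simp only [Finset.mem_Icc] at hxI
          have hblk := block_idx (M := M) (x := x) hM0
          refine ⟨(x - 1) / M, ?_, hblk.1, hblk.2⟩
          simp only [Finset.mem_Icc]
          constructor
          · exact Int.ediv_nonneg (by omega) hM0.le
          · by_contra h
            push_neg at h
            have h5 : M * (b : ℤ) ≤ M * ((x - 1) / M) := mul_le_mul_of_nonneg_left (by omega) hM0.le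
            linarith [hblk.1, hxI.2])
        have hsum2 : ∑ k ∈ Finset.Icc (0 : ℤ) ((b : ℤ) - 1),
            (B.filter (fun x => M * k + 1 ≤ x ∧ x ≤ M * k + M)).card
            ≤ (Finset.Icc (0 : ℤ) ((b : ℤ) - 1)).card * 2 := by
          have := Finset.sum_le_card_nsmul (Finset.Icc (0 : ℤ) ((b : ℤ) - 1))
            (fun k => (B.filter (fun x => M * k + 1 ≤ x ∧ x ≤ M * k + M)).card) 2
            (fun k _ => hper2 k)
          simpa [smul_eq_mul] using this
        have hIccb : (Finset.Icc (0 : ℤ) ((b : ℤ) - 1)).card = b := by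
          rw [Int.card_Icc]
          omega
        rw [hIccb] at hsum2
        have hbound : B.card ≤ b * 2 := le_trans hcnt hsum2
        have hfac : 1 ≤ (r + 1).factorial := Nat.one_le_iff_ne_zero.mpr (Nat.factorial_ne_zero _)
        calc B.card ≤ b * 2 := hbound
          _ ≤ 2 * (r + 1).factorial * b := by nlinarith
    -- convex bound
    have hconv' : ∀ i, ∀ B ⊆ A' i, IsConvexSet B → B.card ≤ (r + 2).factorial * b := by
      intro i B hBA hBconv
      set Pp := B.filter (fun x => ∃ y ∈ B, x < y ∧ y ≤ x + M) with hPp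
      set Qq := B.filter (fun x => ¬∃ y ∈ B, x < y ∧ y ≤ x + M) with hQq
      have hsplit : Pp.card + Qq.card = B.card :=
        Finset.card_filter_add_card_filter_not _
      have hQb : Qq.card ≤ b := by
        rcases Qq.eq_empty_or_nonempty with he | hneQ
        · rw [he]; simp
        · have hQgap : ∀ a d, ConsecIn Qq a d → ((M : ℝ) + 1) ≤ (d : ℝ) - (a : ℝ) := by
            intro a d hc
            obtain ⟨haQ, hdQ, hlt, _⟩ := hc
            simp only [hQq, Finset.mem_filter] at haQ hdQ
            have hnd : ¬(a < d ∧ d ≤ a + M) := fun hcn => haQ.2 ⟨d, hdQ.1, hcn⟩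
            have : M + 1 ≤ d - a := by omega
            have := (by exact_mod_cast this : ((M : ℝ) + 1) ≤ ((d : ℤ) : ℝ) - ((a : ℤ) : ℝ))
            exact this
          have hspan := span_ge ((M : ℝ) + 1) (by positivity) Qq.card Qq hneQ rfl hQgap
          have hQmax := Qq.max'_mem hneQ
          have hQmin := Qq.min'_mem hneQ
          have hmaxI := hA'sub i (hBA (Finset.mem_of_mem_filter _ hQmax))
          have hminI := hA'sub i (hBA (Finset.mem_of_mem_filter _ hQmin))
          simp only [Finset.mem_Icc] at hmaxI hminI
          have hwidth : ((Qq.max' hneQ : ℤ) : ℝ) - ((Qq.min' hneQ : ℤ) : ℝ)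
              ≤ (M : ℝ) * (b : ℝ) - 1 := by
            have : (Qq.max' hneQ : ℤ) - (Qq.min' hneQ : ℤ) ≤ M * b - 1 := by omega
            exact_mod_cast this
          by_contra hcon
          push_neg at hcon
          have hqd : (b : ℝ) + 1 ≤ (Qq.card : ℝ) := by exact_mod_cast hcon
          have hM0' : (0 : ℝ) < (M : ℝ) := by exact_mod_cast hM0
          have hb0' : (1 : ℝ) ≤ (b : ℝ) := by exact_mod_cast hb
          nlinarith
      have hPcons : ∀ x z, ConsecIn Pp x z → ConsecIn B x z ∧ z - x ≤ M := by
        intro x z hc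
        obtain ⟨hxP, hzP, hxz, hPmin⟩ := hc
        have hxP' := hxP
        simp only [hPp, Finset.mem_filter] at hxP'
        obtain ⟨hxB, y, hyB, hxy, hyM⟩ := hxP'
        obtain ⟨y₀, hy₀cons, hy₀le⟩ := exists_next hxB hyB hxy
        have hy₀B := hy₀cons.2.1
        have hxy₀ := hy₀cons.2.2.1
        have hy₀M : y₀ ≤ x + M := le_trans hy₀le hyM
        have hzB : z ∈ B := Finset.mem_of_mem_filter _ hzP
        have hzy : z ≤ y₀ := by
          by_contra hcon
          push_neg at hcon
          have hy₀nP : y₀ ∉ Pp := by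
            intro hmem
            rcases hPmin y₀ hmem with h | h
            · omega
            · omega
          have hy₀Q : ¬∃ w ∈ B, y₀ < w ∧ w ≤ y₀ + M := by
            intro hw
            exact hy₀nP (Finset.mem_filter.mpr ⟨hy₀B, hw⟩)
          obtain ⟨w₀, hw₀cons, hw₀le⟩ := exists_next hy₀B hzB hcon
          have hw₀big : y₀ + M < w₀ := by
            by_contra hc2
            push_neg at hc2
            exact hy₀Q ⟨w₀, hw₀cons.2.1, hw₀cons.2.2.1, hc2⟩
          have hzP' := hzP
          simp only [hPp, Finset.mem_filter] at hzP'
          obtain ⟨_, u, huB, hzu, huM⟩ := hzP'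
          obtain ⟨u₀, hu₀cons, hu₀le⟩ := exists_next hzB huB hzu
          have hmono := gap_mono hBconv (z - w₀).toNat y₀ w₀ z u₀ hw₀cons hu₀cons hw₀le rfl
          omega
        have hy₀z : y₀ ≤ z := by
          rcases hy₀cons.2.2.2 z hzB with h | h
          · omega
          · exact h
        have hzeq : z = y₀ := le_antisymm hzy hy₀z
        subst hzeq
        exact ⟨hy₀cons, by omega⟩
      have hPb : Pp.card ≤ (r + 1) * ((r + 1).factorial * b) := by
        rcases Pp.eq_empty_or_nonempty with he | hneP
        · rw [he]; simp
        · have hPA : Pp ⊆ A' i := fun x hx => hBA (Finset.mem_of_mem_filter _ hx)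
          have hPconv : IsConvexSet Pp := fun a d e h1 h2 =>
            hBconv a d e (hPcons _ _ h1).1 (hPcons _ _ h2).1
          have hrc := run_count M ((r : ℤ) + 2) ((i.val : ℕ) : ℤ) hM0 (by positivity)
            (hcast_ivl i) Pp hneP
            (fun k hk x hx => hmiss i k hk x (hPA hx))
            (fun a d hc => (hPcons a d hc).2)
            ((r + 1).factorial * b) (fun k => hper_conv i Pp hPA hPconv k)
          have h9 : (Pp.card : ℤ) ≤ ((r : ℤ) + 1) * (((r + 1).factorial * b : ℕ) : ℤ) := by
            have : ((r : ℤ) + 2) - 1 = (r : ℤ) + 1 := by ring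
            rw [← this]
            exact hrc
          exact_mod_cast h9
      have hfac : b ≤ (r + 1).factorial * b :=
        Nat.le_mul_of_pos_left b (Nat.factorial_pos _)
      calc B.card = Pp.card + Qq.card := hsplit.symm
        _ ≤ (r + 1) * ((r + 1).factorial * b) + b := Nat.add_le_add hPb hQb
        _ ≤ (r + 1) * ((r + 1).factorial * b) + (r + 1).factorial * b :=
            Nat.add_le_add_left hfac _
        _ = (r + 2) * ((r + 1).factorial * b) := by ring
        _ = (r + 2).factorial * b := by
            have hf2 : Nat.factorial (r + 2) = (r + 2) * Nat.factorial (r + 1) :=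
              Nat.factorial_succ (r + 1)
            rw [hf2]
            ring
    refine ⟨A', hdisj', ?_, hreg', hconv'⟩
    rw [hunion']
    congr 1


end Stmt10Aux

/-- For any positive integer `r` there are arbitrarily large `N` admitting a
partition of `{1, …, N}` into `r` parts, each with `R_2(A_i) ≤ 2·(r−1)!·N^(1/r)`
and `C(A_i) ≤ r!·N^(1/r)`. -/
theorem stmt10 (r : ℕ) (hr : 0 < r) (N₀ : ℕ) :
    ∃ N : ℕ, N₀ ≤ N ∧ ∃ A : Fin r → Finset ℤ,
      (∀ i j, i ≠ j → Disjoint (A i) (A j)) ∧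
      Finset.univ.biUnion A = Finset.Icc (1 : ℤ) (N : ℤ) ∧
      (∀ i, (regMax 2 (A i) : ℝ) ≤ 2 * (Nat.factorial (r - 1)) * (N : ℝ) ^ ((1 : ℝ) / r)) ∧
      (∀ i, (convMax (A i) : ℝ) ≤ (Nat.factorial r) * (N : ℝ) ^ ((1 : ℝ) / r)) := by
  obtain ⟨r', rfl⟩ : ∃ r', r = r' + 1 := ⟨r - 1, by omega⟩
  set b := max N₀ 1 with hbdef
  have hb1 : 1 ≤ b := le_max_right _ _
  obtain ⟨A, hdisj, hunion, hreg, hconv⟩ := Stmt10Aux.key b hb1 r'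
  refine ⟨b ^ (r' + 1), ?_, A, hdisj, ?_, ?_, ?_⟩
  · calc N₀ ≤ b := le_max_left _ _
      _ ≤ b ^ (r' + 1) := Nat.le_self_pow (by omega) b
  · rw [hunion]
    congr 1
  · intro i
    have h1 : regMax 2 (A i) ≤ 2 * r'.factorial * b := Stmt10Aux.regMax_le (hreg i)
    have hNpow : ((b ^ (r' + 1) : ℕ) : ℝ) ^ ((1 : ℝ) / ((r' + 1 : ℕ) : ℝ)) = (b : ℝ) :=
      Stmt10Aux.rpow_inv_pow b (r' + 1) (by omega)
    have hsub : r' + 1 - 1 = r' := by omega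
    rw [hsub, hNpow]
    calc (regMax 2 (A i) : ℝ) ≤ ((2 * r'.factorial * b : ℕ) : ℝ) := by exact_mod_cast h1
      _ = 2 * (r'.factorial : ℝ) * (b : ℝ) := by push_cast; ring
  · intro i
    have h1 : convMax (A i) ≤ (r' + 1).factorial * b := Stmt10Aux.convMax_le (hconv i)
    have hNpow : ((b ^ (r' + 1) : ℕ) : ℝ) ^ ((1 : ℝ) / ((r' + 1 : ℕ) : ℝ)) = (b : ℝ) :=
      Stmt10Aux.rpow_inv_pow b (r' + 1) (by omega)
    rw [hNpow]
    calc (convMax (A i) : ℝ) ≤ (((r' + 1).factorial * b : ℕ) : ℝ) := by exact_mod_cast h1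
      _ = ((r' + 1).factorial : ℝ) * (b : ℝ) := by push_cast; ring
end
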